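/- arXiv:2201.05948 — 3 statements merged into one kernel-verified Lean document; each statement's English description precedes it below -/
import Mathlib

section
/- Disconjugacy equals unique two-point interpolation (Theorem 4.2, (i)⇔(ii)): Assume Hypothesis (H) and let λ ∈ ℝ. Then τ − λ is disconjugate on (a,b) if and only if for every pair of points x₁, x₂ ∈ (a,b) with x₁ ≠ x₂ and arbitrary values u₁, u₂ ∈ ℝ there exists a unique real-valued solution u* of (τ − λ)u = 0 on (a,b) such that u*(x₁) = u₁ and u*(x₂) = u₂. -/
open MeasureTheory Set Filter intervalIntegral

noncomputable section

/-- The open interval of real numbers determined by extended-real endpoints `a`, `b`. -/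
def EI (a b : EReal) : Set ℝ := {x : ℝ | a < (x : EReal) ∧ (x : EReal) < b}

/-- Hypothesis (H): `p, q, r, s` are real-valued measurable on `(a,b)`, `p > 0` and `r > 0`
a.e. on `(a,b)`, and `1/p, q, r, s ∈ L¹_loc((a,b); dx)`. -/
structure SLH (a b : EReal) (p q r s : ℝ → ℝ) : Prop where
  hab : a < b
  measp : Measurable p
  measq : Measurable q
  measr : Measurable r
  meass : Measurable s
  ppos : ∀ᵐ x ∂(volume : Measure ℝ), x ∈ EI a b → 0 < p x
  rpos : ∀ᵐ x ∂(volume : Measure ℝ), x ∈ EI a b → 0 < r x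
  invp_loc : LocallyIntegrableOn (fun x => 1 / p x) (EI a b) volume
  q_loc : LocallyIntegrableOn q (EI a b) volume
  r_loc : LocallyIntegrableOn r (EI a b) volume
  s_loc : LocallyIntegrableOn s (EI a b) volume

/-- `f` is locally absolutely continuous on the interval `I` with a.e. derivative `fd`. -/
def HasAEDerivOn (I : Set ℝ) (f fd : ℝ → ℝ) : Prop :=
  ∀ x ∈ I, ∀ y ∈ I,
    IntervalIntegrable fd volume x y ∧ f y - f x = ∫ t in x..y, fd t

/-- `f ∈ 𝔇_τ(I)`: `f` is locally AC on `I` with a.e. derivative `fd`, the first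
quasi-derivative `f1 = p (f' + s f)` (a.e.) is locally AC with a.e. derivative `f1d`. -/
def InDomTau (I : Set ℝ) (p s : ℝ → ℝ) (f fd f1 f1d : ℝ → ℝ) : Prop :=
  HasAEDerivOn I f fd ∧
    (∀ᵐ t ∂(volume : Measure ℝ), t ∈ I → f1 t = p t * (fd t + s t * f t)) ∧
    HasAEDerivOn I f1 f1d

/-- The differential expression `τ f = (1/r) (−(f^[1])′ + s f^[1] + q f)`. -/
def tauApp (q r s : ℝ → ℝ) (f f1 f1d : ℝ → ℝ) (t : ℝ) : ℝ :=
  (1 / r t) * (-f1d t + s t * f1 t + q t * f t)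

/-- `u` (with data `ud, u1, u1d`) is a real solution of `(τ - lam) u = 0` on `I`. -/
def IsSolutionWith (I : Set ℝ) (p q r s : ℝ → ℝ) (lam : ℝ) (u ud u1 u1d : ℝ → ℝ) : Prop :=
  InDomTau I p s u ud u1 u1d ∧
    ∀ᵐ t ∂(volume : Measure ℝ), t ∈ I → tauApp q r s u u1 u1d t = lam * u t

/-- `u` is a real solution of `(τ - lam) u = 0` on `I`. -/
def IsSolution (I : Set ℝ) (p q r s : ℝ → ℝ) (lam : ℝ) (u : ℝ → ℝ) : Prop :=
  ∃ ud u1 u1d, IsSolutionWith I p q r s lam u ud u1 u1d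

/-- Complex version: loc AC with a.e. derivative. -/
def HasAEDerivOnC (I : Set ℝ) (f fd : ℝ → ℂ) : Prop :=
  ∀ x ∈ I, ∀ y ∈ I,
    IntervalIntegrable fd volume x y ∧ f y - f x = ∫ t in x..y, fd t

/-- Complex version of `InDomTau`. -/
def InDomTauC (I : Set ℝ) (p s : ℝ → ℝ) (f fd f1 f1d : ℝ → ℂ) : Prop :=
  HasAEDerivOnC I f fd ∧
    (∀ᵐ t ∂(volume : Measure ℝ), t ∈ I → f1 t = (p t : ℂ) * (fd t + (s t : ℂ) * f t)) ∧
    HasAEDerivOnC I f1 f1d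

/-- Complex version of `τ`. -/
def tauAppC (q r s : ℝ → ℝ) (f f1 f1d : ℝ → ℂ) (t : ℝ) : ℂ :=
  (1 / (r t : ℂ)) * (-f1d t + (s t : ℂ) * f1 t + (q t : ℂ) * f t)

/-- `u` (with data) is a complex solution of `(τ - z) u = 0` on `I`. -/
def IsSolutionWithC (I : Set ℝ) (p q r s : ℝ → ℝ) (z : ℂ) (u ud u1 u1d : ℝ → ℂ) : Prop :=
  InDomTauC I p s u ud u1 u1d ∧
    ∀ᵐ t ∂(volume : Measure ℝ), t ∈ I → tauAppC q r s u u1 u1d t = z * u t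

/-- `u` does not vanish identically on `I`. -/
def NontrivOn (I : Set ℝ) (u : ℝ → ℝ) : Prop := ∃ x ∈ I, u x ≠ 0

/-- Linear independence of two real functions on `I`. -/
def LinIndepOn (I : Set ℝ) (u v : ℝ → ℝ) : Prop :=
  ∀ c₁ c₂ : ℝ, (∀ x ∈ I, c₁ * u x + c₂ * v x = 0) → c₁ = 0 ∧ c₂ = 0

/-- `τ - lam` is disconjugate on `I`: every nontrivial real solution has at most one zero. -/
def Disconjugate (I : Set ℝ) (p q r s : ℝ → ℝ) (lam : ℝ) : Prop :=
  ∀ u : ℝ → ℝ, IsSolution I p q r s lam u → NontrivOn I u →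
    ∀ x ∈ I, ∀ y ∈ I, u x = 0 → u y = 0 → x = y

/-- `f` has compact support contained in `I`. -/
def SuppIn (I : Set ℝ) (f : ℝ → ℂ) : Prop :=
  ∃ K : Set ℝ, IsCompact K ∧ K ⊆ I ∧ ∀ x ∈ I \ K, f x = 0

/-- Membership (with derivative data) in the domain of the pre-minimal operator `Ṫ`. -/
def InDomPreMin (a b : EReal) (p q r s : ℝ → ℝ) (f fd f1 f1d : ℝ → ℂ) : Prop :=
  InDomTauC (EI a b) p s f fd f1 f1d ∧ SuppIn (EI a b) f ∧
    IntegrableOn (fun x => r x * ‖f x‖ ^ 2) (EI a b) volume ∧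
    IntegrableOn (fun x => r x * ‖tauAppC q r s f f1 f1d x‖ ^ 2) (EI a b) volume

/-- `(f, Ṫ f) ≥ lam0 ‖f‖²` for all `f ∈ dom(Ṫ)`. -/
def PreMinLowerBound (a b : EReal) (p q r s : ℝ → ℝ) (lam0 : ℝ) : Prop :=
  ∀ f fd f1 f1d : ℝ → ℂ, InDomPreMin a b p q r s f fd f1 f1d →
    lam0 * (∫ x in EI a b, r x * ‖f x‖ ^ 2) ≤
      (∫ x in EI a b, (r x : ℂ) * (starRingEnd ℂ (f x) * tauAppC q r s f f1 f1d x)).re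

/-- Membership (with derivative data) in the domain of the maximal operator `T_max`. -/
def InDomMax (a b : EReal) (p q r s : ℝ → ℝ) (g gd g1 g1d : ℝ → ℂ) : Prop :=
  InDomTauC (EI a b) p s g gd g1 g1d ∧
    IntegrableOn (fun x => r x * ‖g x‖ ^ 2) (EI a b) volume ∧
    IntegrableOn (fun x => r x * ‖tauAppC q r s g g1 g1d x‖ ^ 2) (EI a b) volume

/-- `τ - lam` is oscillatory at `b`: some nontrivial real solution has zeros accumulating at `b`. -/
def OscillatoryAtB (a b : EReal) (p q r s : ℝ → ℝ) (lam : ℝ) : Prop :=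
  ∃ u : ℝ → ℝ, IsSolution (EI a b) p q r s lam u ∧ NontrivOn (EI a b) u ∧
    ∀ c ∈ EI a b, ∃ x ∈ EI a b, c < x ∧ u x = 0

/-- `τ - lam` is oscillatory at `a`. -/
def OscillatoryAtA (a b : EReal) (p q r s : ℝ → ℝ) (lam : ℝ) : Prop :=
  ∃ u : ℝ → ℝ, IsSolution (EI a b) p q r s lam u ∧ NontrivOn (EI a b) u ∧
    ∀ c ∈ EI a b, ∃ x ∈ EI a b, x < c ∧ u x = 0

/-- The filter of real numbers tending to the endpoint `a` from the right. -/
def atEndA (a : EReal) : Filter ℝ :=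
  Filter.comap (fun x : ℝ => (x : EReal)) (nhdsWithin a (Set.Ioi a))

/-- The filter of real numbers tending to the endpoint `b` from the left. -/
def atEndB (b : EReal) : Filter ℝ :=
  Filter.comap (fun x : ℝ => (x : EReal)) (nhdsWithin b (Set.Iio b))

/-- `u` lies in `L²((a,b); r dx)` near `b`. -/
def L2NearB (a b : EReal) (r : ℝ → ℝ) (u : ℝ → ℂ) : Prop :=
  ∀ c ∈ EI a b, IntegrableOn (fun x => r x * ‖u x‖ ^ 2) (EI (c : EReal) b) volume

/-- `u` lies in `L²((a,b); r dx)` near `a`. -/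
def L2NearA (a b : EReal) (r : ℝ → ℝ) (u : ℝ → ℂ) : Prop :=
  ∀ c ∈ EI a b, IntegrableOn (fun x => r x * ‖u x‖ ^ 2) (EI a (c : EReal)) volume

/-- `τ` is in the limit circle case at `b`. -/
def LimitCircleAtB (a b : EReal) (p q r s : ℝ → ℝ) : Prop :=
  ∀ z : ℂ, ∀ u ud u1 u1d : ℝ → ℂ,
    IsSolutionWithC (EI a b) p q r s z u ud u1 u1d → L2NearB a b r u

/-- `τ` is in the limit circle case at `a`. -/
def LimitCircleAtA (a b : EReal) (p q r s : ℝ → ℝ) : Prop :=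
  ∀ z : ℂ, ∀ u ud u1 u1d : ℝ → ℂ,
    IsSolutionWithC (EI a b) p q r s z u ud u1 u1d → L2NearA a b r u

/-- `u` is a principal solution of `(τ - lam) u = 0` at `b` on the interval `I`. -/
def PrincipalAtB (I : Set ℝ) (b : EReal) (p q r s : ℝ → ℝ) (lam : ℝ) (u : ℝ → ℝ) : Prop :=
  IsSolution I p q r s lam u ∧ NontrivOn I u ∧
    ∀ v : ℝ → ℝ, IsSolution I p q r s lam v → LinIndepOn I u v →
      Tendsto (fun x => u x / v x) (atEndB b) (nhds 0)

/-- `u` is a principal solution of `(τ - lam) u = 0` at `a` on the interval `I`. -/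
def PrincipalAtA (I : Set ℝ) (a : EReal) (p q r s : ℝ → ℝ) (lam : ℝ) (u : ℝ → ℝ) : Prop :=
  IsSolution I p q r s lam u ∧ NontrivOn I u ∧
    ∀ v : ℝ → ℝ, IsSolution I p q r s lam v → LinIndepOn I u v →
      Tendsto (fun x => u x / v x) (atEndA a) (nhds 0)

/-- `v` is a nonprincipal solution of `(τ - lam) u = 0` at `b` on the interval `I`. -/
def NonprincipalAtB (I : Set ℝ) (b : EReal) (p q r s : ℝ → ℝ) (lam : ℝ) (v : ℝ → ℝ) : Prop :=
  IsSolution I p q r s lam v ∧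
    ∃ u : ℝ → ℝ, PrincipalAtB I b p q r s lam u ∧ LinIndepOn I u v

end


section ODEAux


structure ODE (F : ℝ → ℝ × ℝ → ℝ × ℝ) (M : ℝ → ℝ) : Prop where
  hM0 : ∀ t, 0 ≤ M t
  hlip : ∀ t u v, ‖F t u - F t v‖ ≤ M t * ‖u - v‖
  hF0 : ∀ t, F t 0 = 0
  hadd : ∀ t u v, F t (u + v) = F t u + F t v
  hsmul : ∀ t (c : ℝ) u, F t (c • u) = c • F t u
  hmeas : ∀ w : ℝ → ℝ × ℝ, Measurable w → Measurable (fun t => F t (w t))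

namespace ODE

variable {F : ℝ → ℝ × ℝ → ℝ × ℝ} {M : ℝ → ℝ}

theorem hbd (hO : ODE F M) (t : ℝ) (u : ℝ × ℝ) : ‖F t u‖ ≤ M t * ‖u‖ := by
  simpa [hO.hF0 t] using hO.hlip t u 0

/-- the integrand is integrable on compacts, for continuous-on w -/
theorem integrableOn_comp (hO : ODE F M) {c d : ℝ} (hMcd : IntegrableOn M (Icc c d) volume)
    {w : ℝ → ℝ × ℝ} (hw : ContinuousOn w (Icc c d)) :
    IntegrableOn (fun τ => F τ (w τ)) (Icc c d) volume := by
  obtain ⟨C, hC⟩ := isCompact_Icc.exists_bound_of_continuousOn hw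
  have hwm : AEMeasurable w (volume.restrict (Icc c d)) :=
    hw.aemeasurable measurableSet_Icc
  have hmF : AEMeasurable (fun τ => F τ (w τ)) (volume.restrict (Icc c d)) := by
    refine ⟨fun τ => F τ (hwm.mk w τ), hO.hmeas _ hwm.measurable_mk, ?_⟩
    filter_upwards [hwm.ae_eq_mk] with τ hτ
    rw [hτ]
  refine Integrable.mono' (g := fun τ => (max C 0) * M τ) (hMcd.const_mul _)
    hmF.aestronglyMeasurable ?_
  filter_upwards [ae_restrict_mem measurableSet_Icc] with τ hτ
  calc ‖F τ (w τ)‖ ≤ M τ * ‖w τ‖ := hO.hbd τ (w τ)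
    _ ≤ M τ * (max C 0) :=
        mul_le_mul_of_nonneg_left (le_trans (hC τ hτ) (le_max_left _ _)) (hO.hM0 τ)
    _ = max C 0 * M τ := mul_comm _ _

theorem intervalIntegrable_comp (hO : ODE F M) {c d : ℝ} (hMcd : IntegrableOn M (Icc c d) volume)
    {w : ℝ → ℝ × ℝ} (hw : ContinuousOn w (Icc c d)) {x y : ℝ}
    (hx : x ∈ Icc c d) (hy : y ∈ Icc c d) :
    IntervalIntegrable (fun τ => F τ (w τ)) volume x y := by
  rw [intervalIntegrable_iff]
  exact (hO.integrableOn_comp hMcd hw).mono_set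
    ((uIoc_subset_uIcc).trans (uIcc_subset_Icc hx hy))

end ODE

def SolOn (F : ℝ → ℝ × ℝ → ℝ × ℝ) (c d x₀ : ℝ) (w₀ : ℝ × ℝ) (w : ℝ → ℝ × ℝ) : Prop :=
  ContinuousOn w (Icc c d) ∧ ∀ t ∈ Icc c d, w t = w₀ + ∫ τ in x₀..t, F τ (w τ)

namespace ODE

theorem exists_unique_small (hO : ODE F M) {c d x₀ : ℝ} (hcd : c ≤ d) (hx₀ : x₀ ∈ Icc c d)
    (hMcd : IntegrableOn M (Icc c d) volume) (hsmall : (∫ τ in Icc c d, M τ) ≤ 1 / 2)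
    (w₀ : ℝ × ℝ) :
    ∃ w, SolOn F c d x₀ w₀ w ∧ ∀ w', SolOn F c d x₀ w₀ w' → EqOn w' w (Icc c d) := by
  haveI : Nonempty (Icc c d) := ⟨⟨c, le_refl c, hcd⟩⟩
  -- the integral operator
  have key : ∀ w : C(Icc c d, ℝ × ℝ), ContinuousOn
      (fun t : ℝ => w₀ + ∫ τ in x₀..t, F τ (IccExtend hcd w τ)) (Icc c d) := by
    intro w
    have hwe : ContinuousOn (IccExtend hcd w) (Icc c d) :=
      (w.continuous.comp continuous_projIcc).continuousOn
    have hint := hO.integrableOn_comp hMcd hwe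
    have hprim : ContinuousOn (fun t : ℝ => ∫ τ in c..t, F τ (IccExtend hcd w τ)) (Icc c d) := by
      have := continuousOn_primitive_interval (a := c) (b := d)
        (f := fun τ => F τ (IccExtend hcd w τ)) (μ := volume) (by rwa [uIcc_of_le hcd])
      rwa [uIcc_of_le hcd] at this
    have heq : ∀ t ∈ Icc c d, w₀ + (∫ τ in x₀..t, F τ (IccExtend hcd w τ)) =
        w₀ + ((∫ τ in c..t, F τ (IccExtend hcd w τ)) - ∫ τ in c..x₀, F τ (IccExtend hcd w τ)) := by
      intro t ht
      rw [integral_interval_sub_left (hO.intervalIntegrable_comp hMcd hwe (left_mem_Icc.2 hcd) ht)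
        (hO.intervalIntegrable_comp hMcd hwe (left_mem_Icc.2 hcd) hx₀)]
    refine ContinuousOn.congr ?_ (fun t ht => heq t ht)
    exact continuousOn_const.add (hprim.sub continuousOn_const)
  set T : C(Icc c d, ℝ × ℝ) → C(Icc c d, ℝ × ℝ) := fun w =>
    ⟨fun t => w₀ + ∫ τ in x₀..(t : ℝ), F τ (IccExtend hcd w τ),
      continuousOn_iff_continuous_restrict.1 (key w)⟩ with hT
  have hlipT : ∀ w w' : C(Icc c d, ℝ × ℝ), dist (T w) (T w') ≤ (1 / 2) * dist w w' := by
    intro w w'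
    refine (ContinuousMap.dist_le (by positivity)).2 (fun t => ?_)
    have hwe : ContinuousOn (IccExtend hcd w) (Icc c d) :=
      (w.continuous.comp continuous_projIcc).continuousOn
    have hwe' : ContinuousOn (IccExtend hcd w') (Icc c d) :=
      (w'.continuous.comp continuous_projIcc).continuousOn
    have hi := hO.intervalIntegrable_comp hMcd hwe hx₀ t.2
    have hi' := hO.intervalIntegrable_comp hMcd hwe' hx₀ t.2
    have hsub : uIoc x₀ (t : ℝ) ⊆ Icc c d := uIoc_subset_uIcc.trans (uIcc_subset_Icc hx₀ t.2)
    have e1 : (T w) t = w₀ + ∫ τ in x₀..(t : ℝ), F τ (IccExtend hcd w τ) := rfl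
    have e2 : (T w') t = w₀ + ∫ τ in x₀..(t : ℝ), F τ (IccExtend hcd w' τ) := rfl
    rw [dist_eq_norm, e1, e2, add_sub_add_left_eq_sub,
      ← intervalIntegral.integral_sub hi hi']
    calc ‖∫ τ in x₀..(t : ℝ), F τ (IccExtend hcd w τ) - F τ (IccExtend hcd w' τ)‖
        ≤ ∫ τ in uIoc x₀ (t : ℝ), ‖F τ (IccExtend hcd w τ) - F τ (IccExtend hcd w' τ)‖ :=
          intervalIntegral.norm_integral_le_integral_norm_uIoc
      _ ≤ ∫ τ in uIoc x₀ (t : ℝ), M τ * dist w w' := by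
          refine setIntegral_mono_on ?_ ?_ measurableSet_uIoc (fun τ hτ => ?_)
          · rw [intervalIntegrable_iff] at hi hi'
            exact (hi.sub hi').norm
          · exact ((hMcd.mono_set hsub).mul_const _)
          · calc ‖F τ (IccExtend hcd w τ) - F τ (IccExtend hcd w' τ)‖
                ≤ M τ * ‖IccExtend hcd w τ - IccExtend hcd w' τ‖ := hO.hlip τ _ _
              _ ≤ M τ * dist w w' := by
                  refine mul_le_mul_of_nonneg_left ?_ (hO.hM0 τ)
                  rw [← dist_eq_norm]
                  exact ContinuousMap.dist_apply_le_dist _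
      _ ≤ ∫ τ in Icc c d, M τ * dist w w' := by
          refine setIntegral_mono_set ((hMcd.mul_const _)) ?_ (HasSubset.Subset.eventuallyLE hsub)
          filter_upwards with τ using mul_nonneg (hO.hM0 τ) dist_nonneg
      _ = (∫ τ in Icc c d, M τ) * dist w w' := by rw [MeasureTheory.integral_mul_const]
      _ ≤ (1 / 2) * dist w w' := mul_le_mul_of_nonneg_right hsmall dist_nonneg
  have hC : ContractingWith (1 / 2 : NNReal) T := by
    constructor
    · have h12 : ((1 / 2 : NNReal) : ℝ) < ((1 : NNReal) : ℝ) := by norm_num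
      exact_mod_cast h12
    · refine LipschitzWith.of_dist_le_mul (fun w w' => ?_)
      simpa using hlipT w w'
  set wstar := hC.fixedPoint T with hws
  have hfix : Function.IsFixedPt T wstar := hC.fixedPoint_isFixedPt
  refine ⟨IccExtend hcd wstar, ⟨(wstar.continuous.comp continuous_projIcc).continuousOn,
    fun t ht => ?_⟩, fun w' hw' => ?_⟩
  · have hfx : wstar ⟨t, ht⟩ = (T wstar) ⟨t, ht⟩ := by rw [hfix]
    rw [IccExtend_of_mem hcd _ ht, hfx]
    rfl
  · -- uniqueness
    set w'' : C(Icc c d, ℝ × ℝ) := ⟨fun t => w' t,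
      continuousOn_iff_continuous_restrict.1 hw'.1⟩ with hw''
    have hfix' : Function.IsFixedPt T w'' := by
      refine ContinuousMap.ext (fun t => ?_)
      have hext : EqOn (fun τ => F τ (IccExtend hcd w'' τ)) (fun τ => F τ (w' τ))
          (uIcc x₀ (t : ℝ)) := by
        intro τ hτ
        have hτ' : τ ∈ Icc c d := uIcc_subset_Icc hx₀ t.2 hτ
        simp only [IccExtend_of_mem hcd _ hτ']
        rfl
      show w₀ + (∫ τ in x₀..(t : ℝ), F τ (IccExtend hcd w'' τ)) = w'' t
      rw [intervalIntegral.integral_congr hext]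
      exact (hw'.2 t t.2).symm
    have : w'' = wstar := hC.fixedPoint_unique hfix'
    intro t ht
    have h1 : w' t = w'' ⟨t, ht⟩ := rfl
    rw [h1, this, IccExtend_of_mem hcd _ ht]

end ODE

theorem continuousOn_if_le_aux {c m d : ℝ} (hcm : c ≤ m) (hmd : m ≤ d) {w w' : ℝ → ℝ × ℝ}
    (hw : ContinuousOn w (Icc c m)) (hw' : ContinuousOn w' (Icc m d)) (hbd : w m = w' m) :
    ContinuousOn (fun t => if t ≤ m then w t else w' t) (Icc c d) := by
  set W : ℝ → ℝ × ℝ := IccExtend hcm (fun t : Icc c m => w t) with hW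
  set W' : ℝ → ℝ × ℝ := IccExtend hmd (fun t : Icc m d => w' t) with hW'
  have hWc : Continuous W :=
    (continuousOn_iff_continuous_restrict.1 hw).comp continuous_projIcc
  have hW'c : Continuous W' :=
    (continuousOn_iff_continuous_restrict.1 hw').comp continuous_projIcc
  have hV : Continuous (fun t => if t ≤ m then W t else W' t) := by
    refine Continuous.if_le hWc hW'c continuous_id continuous_const (fun x hx => ?_)
    subst hx
    rw [hW, hW', IccExtend_of_mem hcm _ (right_mem_Icc.2 hcm),
      IccExtend_of_mem hmd _ (left_mem_Icc.2 hmd)]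
    exact hbd
  refine hV.continuousOn.congr (fun t ht => ?_)
  by_cases htm : t ≤ m
  · simp only [htm, if_true]
    rw [hW, IccExtend_of_mem hcm _ ⟨ht.1, htm⟩]
  · simp only [htm, if_false]
    rw [hW', IccExtend_of_mem hmd _ ⟨le_of_not_ge htm, ht.2⟩]

namespace ODE

theorem glue_right (hO : ODE F M) {c m d x₀ : ℝ} (hcm : c ≤ m) (hmd : m ≤ d)
    (hMcd : IntegrableOn M (Icc c d) volume) (hx₀ : x₀ ∈ Icc c m)
    {w₀ : ℝ × ℝ} {w w' : ℝ → ℝ × ℝ} (hw : SolOn F c m x₀ w₀ w)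
    (hw' : SolOn F m d m (w m) w') :
    SolOn F c d x₀ w₀ (fun t => if t ≤ m then w t else w' t) := by
  have hbm : w' m = w m := by
    have := hw'.2 m (left_mem_Icc.2 hmd)
    simpa using this
  set v : ℝ → ℝ × ℝ := fun t => if t ≤ m then w t else w' t with hv
  have hsub1 : Icc c m ⊆ Icc c d := Icc_subset_Icc le_rfl hmd
  have hsub2 : Icc m d ⊆ Icc c d := Icc_subset_Icc hcm le_rfl
  have heqw : EqOn v w (Icc c m) := fun τ hτ => by simp only [hv, hτ.2, if_true]
  have heqw' : EqOn v w' (Icc m d) := fun τ hτ => by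
    by_cases hτm : τ ≤ m
    · have : τ = m := le_antisymm hτm hτ.1
      subst this
      simp only [hv, if_pos le_rfl, hbm]
    · simp only [hv, hτm, if_false]
  have hcont : ContinuousOn v (Icc c d) := continuousOn_if_le_aux hcm hmd hw.1 hw'.1 hbm.symm
  refine ⟨hcont, fun t ht => ?_⟩
  by_cases htm : t ≤ m
  · have ht' : t ∈ Icc c m := ⟨ht.1, htm⟩
    have : v t = w t := heqw ht'
    rw [this, hw.2 t ht']
    congr 1
    refine (intervalIntegral.integral_congr (fun τ hτ => ?_)).symm
    have : τ ∈ Icc c m := uIcc_subset_Icc hx₀ ht' hτ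
    simp only [heqw this]
  · have hmt : m ≤ t := le_of_not_ge htm
    have ht' : t ∈ Icc m d := ⟨hmt, ht.2⟩
    have h1 : v t = w' t := heqw' ht'
    have hI1 : IntervalIntegrable (fun τ => F τ (v τ)) volume x₀ m :=
      hO.intervalIntegrable_comp hMcd hcont (hsub1 hx₀) (hsub1 (right_mem_Icc.2 hcm))
    have hI2 : IntervalIntegrable (fun τ => F τ (v τ)) volume m t :=
      hO.intervalIntegrable_comp hMcd hcont (hsub1 (right_mem_Icc.2 hcm)) ht
    have e1 : (∫ τ in x₀..m, F τ (w τ)) = ∫ τ in x₀..m, F τ (v τ) :=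
      intervalIntegral.integral_congr (fun τ hτ => by
        simp only [heqw (uIcc_subset_Icc hx₀ (right_mem_Icc.2 hcm) hτ)])
    have e2 : (∫ τ in m..t, F τ (w' τ)) = ∫ τ in m..t, F τ (v τ) :=
      intervalIntegral.integral_congr (fun τ hτ => by
        simp only [heqw' (uIcc_subset_Icc (left_mem_Icc.2 hmd) ht' hτ)])
    rw [h1, hw'.2 t ht', hw.2 m (right_mem_Icc.2 hcm), e1, e2, add_assoc,
      intervalIntegral.integral_add_adjacent_intervals hI1 hI2]

theorem glue_left (hO : ODE F M) {c m d x₀ : ℝ} (hcm : c ≤ m) (hmd : m ≤ d)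
    (hMcd : IntegrableOn M (Icc c d) volume) (hx₀ : x₀ ∈ Icc m d)
    {w₀ : ℝ × ℝ} {w w' : ℝ → ℝ × ℝ} (hw' : SolOn F m d x₀ w₀ w')
    (hw : SolOn F c m m (w' m) w) :
    SolOn F c d x₀ w₀ (fun t => if t ≤ m then w t else w' t) := by
  have hbm : w m = w' m := by
    have := hw.2 m (right_mem_Icc.2 hcm)
    simpa using this
  set v : ℝ → ℝ × ℝ := fun t => if t ≤ m then w t else w' t with hv
  have hsub1 : Icc c m ⊆ Icc c d := Icc_subset_Icc le_rfl hmd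
  have hsub2 : Icc m d ⊆ Icc c d := Icc_subset_Icc hcm le_rfl
  have heqw : EqOn v w (Icc c m) := fun τ hτ => by simp only [hv, hτ.2, if_true]
  have heqw' : EqOn v w' (Icc m d) := fun τ hτ => by
    by_cases hτm : τ ≤ m
    · have : τ = m := le_antisymm hτm hτ.1
      subst this
      simp only [hv, if_pos le_rfl, hbm]
    · simp only [hv, hτm, if_false]
  have hcont : ContinuousOn v (Icc c d) := continuousOn_if_le_aux hcm hmd hw.1 hw'.1 hbm
  refine ⟨hcont, fun t ht => ?_⟩
  by_cases htm : t ≤ m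
  · have hmm : m ∈ Icc m d := left_mem_Icc.2 hmd
    have ht' : t ∈ Icc c m := ⟨ht.1, htm⟩
    have hI1 : IntervalIntegrable (fun τ => F τ (v τ)) volume x₀ m :=
      hO.intervalIntegrable_comp hMcd hcont (hsub2 hx₀) (hsub2 hmm)
    have hI2 : IntervalIntegrable (fun τ => F τ (v τ)) volume m t :=
      hO.intervalIntegrable_comp hMcd hcont (hsub2 hmm) ht
    have e1 : (∫ τ in x₀..m, F τ (w' τ)) = ∫ τ in x₀..m, F τ (v τ) :=
      intervalIntegral.integral_congr (fun τ hτ => by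
        simp only [heqw' (uIcc_subset_Icc hx₀ hmm hτ)])
    have e2 : (∫ τ in m..t, F τ (w τ)) = ∫ τ in m..t, F τ (v τ) :=
      intervalIntegral.integral_congr (fun τ hτ => by
        simp only [heqw (uIcc_subset_Icc (right_mem_Icc.2 hcm) ht' hτ)])
    have h1 : v t = w t := heqw ht'
    rw [h1, hw.2 t ht', hw'.2 m hmm, e1, e2, add_assoc,
      intervalIntegral.integral_add_adjacent_intervals hI1 hI2]
  · have hmt : m ≤ t := le_of_not_ge htm
    have ht' : t ∈ Icc m d := ⟨hmt, ht.2⟩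
    have h1 : v t = w' t := heqw' ht'
    rw [h1, hw'.2 t ht']
    congr 1
    refine (intervalIntegral.integral_congr (fun τ hτ => ?_)).symm
    have : τ ∈ Icc m d := uIcc_subset_Icc hx₀ ht' hτ
    simp only [heqw' this]

end ODE

namespace ODE

theorem exists_unique_nat (hO : ODE F M) (n : ℕ) : ∀ c d x₀ : ℝ, ∀ w₀ : ℝ × ℝ, c ≤ d →
    x₀ ∈ Icc c d → IntegrableOn M (Icc c d) volume → (∫ τ in Icc c d, M τ) ≤ (n : ℝ) / 2 →
    ∃ w, SolOn F c d x₀ w₀ w ∧ ∀ w', SolOn F c d x₀ w₀ w' → EqOn w' w (Icc c d) := by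
  induction n with
  | zero =>
    intro c d x₀ w₀ hcd hx₀ hM hb
    exact hO.exists_unique_small hcd hx₀ hM (le_trans (by simpa using hb) (by norm_num)) w₀
  | succ n ih =>
    intro c d x₀ w₀ hcd hx₀ hM hb
    by_cases hsm : (∫ τ in Icc c d, M τ) ≤ 1 / 2
    · exact hO.exists_unique_small hcd hx₀ hM hsm w₀
    · have hn1 : 1 ≤ n := by
        by_contra hn
        push_neg at hn
        interval_cases n
        · apply hsm
          simpa using hb
      -- split the interval at a point where the integral halves
      set g : ℝ → ℝ := fun t => ∫ τ in c..t, M τ with hg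
      have hgc : ContinuousOn g (Icc c d) := by
        have := continuousOn_primitive_interval (a := c) (b := d) (f := M) (μ := volume)
          (by rwa [uIcc_of_le hcd])
        rwa [uIcc_of_le hcd] at this
      have hgc0 : g c = 0 := intervalIntegral.integral_same
      have hgd : g d = ∫ τ in Icc c d, M τ := by
        rw [hg]
        simp only
        rw [intervalIntegral.integral_of_le hcd, ← integral_Icc_eq_integral_Ioc]
      have hgd0 : 0 ≤ g d := by
        rw [hgd]
        exact setIntegral_nonneg measurableSet_Icc (fun τ _ => hO.hM0 τ)
      obtain ⟨m, hm, hgm⟩ : ∃ m ∈ Icc c d, g m = g d / 2 := by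
        have := intermediate_value_Icc hcd hgc
        have hmem : g d / 2 ∈ Icc (g c) (g d) := by
          rw [hgc0]
          constructor <;> linarith
        obtain ⟨m, hm1, hm2⟩ := this hmem
        exact ⟨m, hm1, hm2⟩
      have hMcm : IntegrableOn M (Icc c m) volume := hM.mono_set (Icc_subset_Icc le_rfl hm.2)
      have hMmd : IntegrableOn M (Icc m d) volume := hM.mono_set (Icc_subset_Icc hm.1 le_rfl)
      have hIcm : (∫ τ in Icc c m, M τ) = g m := by
        rw [hg]
        simp only
        rw [intervalIntegral.integral_of_le hm.1, ← integral_Icc_eq_integral_Ioc]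
      have hImd : (∫ τ in Icc m d, M τ) = g d - g m := by
        have h1 : (∫ τ in c..d, M τ) - (∫ τ in c..m, M τ) = ∫ τ in m..d, M τ :=
          intervalIntegral.integral_interval_sub_left
            ((intervalIntegrable_iff_integrableOn_Icc_of_le hcd).2 hM)
            ((intervalIntegrable_iff_integrableOn_Icc_of_le hm.1).2 hMcm)
        rw [intervalIntegral.integral_of_le hm.2, ← integral_Icc_eq_integral_Ioc] at h1
        exact h1.symm
      have hbound1 : (∫ τ in Icc c m, M τ) ≤ (n : ℝ) / 2 := by
        rw [hIcm, hgm, hgd]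
        have : ((n : ℝ) + 1) / 4 ≤ (n : ℝ) / 2 := by
          have : (1 : ℝ) ≤ (n : ℝ) := by exact_mod_cast hn1
          linarith
        push_cast at hb
        linarith
      have hbound2 : (∫ τ in Icc m d, M τ) ≤ (n : ℝ) / 2 := by
        rw [hImd, hgm, hgd]
        have : (1 : ℝ) ≤ (n : ℝ) := by exact_mod_cast hn1
        push_cast at hb
        linarith
      by_cases hx : x₀ ≤ m
      · -- base point in the left half
        have hx₀' : x₀ ∈ Icc c m := ⟨hx₀.1, hx⟩
        obtain ⟨w1, hw1, hu1⟩ := ih c m x₀ w₀ hm.1 hx₀' hMcm hbound1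
        obtain ⟨w2, hw2, hu2⟩ := ih m d m (w1 m) hm.2 (left_mem_Icc.2 hm.2) hMmd hbound2
        refine ⟨_, hO.glue_right hm.1 hm.2 hM hx₀' hw1 hw2, ?_⟩
        intro w' hw'
        have hr1 : SolOn F c m x₀ w₀ w' :=
          ⟨hw'.1.mono (Icc_subset_Icc le_rfl hm.2),
            fun t ht => hw'.2 t (Icc_subset_Icc le_rfl hm.2 ht)⟩
        have hEq1 := hu1 w' hr1
        have hr2 : SolOn F m d m (w1 m) w' := by
          refine ⟨hw'.1.mono (Icc_subset_Icc hm.1 le_rfl), fun t ht => ?_⟩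
          have hint1 : IntervalIntegrable (fun τ => F τ (w' τ)) volume x₀ m :=
            hO.intervalIntegrable_comp hM hw'.1 hx₀ hm
          have hint2 : IntervalIntegrable (fun τ => F τ (w' τ)) volume m t :=
            hO.intervalIntegrable_comp hM hw'.1 hm (Icc_subset_Icc hm.1 le_rfl ht)
          have h1 := hw'.2 t (Icc_subset_Icc hm.1 le_rfl ht)
          rw [← intervalIntegral.integral_add_adjacent_intervals hint1 hint2, ← add_assoc,
            ← hw'.2 m (Icc_subset_Icc le_rfl hm.2 (right_mem_Icc.2 hm.1)),
            hEq1 (right_mem_Icc.2 hm.1)] at h1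
          exact h1
        have hEq2 := hu2 w' hr2
        intro t ht
        by_cases htm : t ≤ m
        · simp only [htm, if_true]
          exact hEq1 ⟨ht.1, htm⟩
        · simp only [htm, if_false]
          exact hEq2 ⟨le_of_not_ge htm, ht.2⟩
      · -- base point in the right half
        have hx₀' : x₀ ∈ Icc m d := ⟨le_of_not_ge hx, hx₀.2⟩
        obtain ⟨w2, hw2, hu2⟩ := ih m d x₀ w₀ hm.2 hx₀' hMmd hbound2
        obtain ⟨w1, hw1, hu1⟩ := ih c m m (w2 m) hm.1 (right_mem_Icc.2 hm.1) hMcm hbound1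
        refine ⟨_, hO.glue_left hm.1 hm.2 hM hx₀' hw2 hw1, ?_⟩
        intro w' hw'
        have hr2 : SolOn F m d x₀ w₀ w' :=
          ⟨hw'.1.mono (Icc_subset_Icc hm.1 le_rfl),
            fun t ht => hw'.2 t (Icc_subset_Icc hm.1 le_rfl ht)⟩
        have hEq2 := hu2 w' hr2
        have hr1 : SolOn F c m m (w2 m) w' := by
          refine ⟨hw'.1.mono (Icc_subset_Icc le_rfl hm.2), fun t ht => ?_⟩
          have hint1 : IntervalIntegrable (fun τ => F τ (w' τ)) volume x₀ m :=
            hO.intervalIntegrable_comp hM hw'.1 hx₀ hm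
          have hint2 : IntervalIntegrable (fun τ => F τ (w' τ)) volume m t :=
            hO.intervalIntegrable_comp hM hw'.1 hm (Icc_subset_Icc le_rfl hm.2 ht)
          have h1 := hw'.2 t (Icc_subset_Icc le_rfl hm.2 ht)
          rw [← intervalIntegral.integral_add_adjacent_intervals hint1 hint2, ← add_assoc,
            ← hw'.2 m (Icc_subset_Icc hm.1 le_rfl (left_mem_Icc.2 hm.2)),
            hEq2 (left_mem_Icc.2 hm.2)] at h1
          exact h1
        have hEq1 := hu1 w' hr1
        intro t ht
        by_cases htm : t ≤ m
        · simp only [htm, if_true]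
          exact hEq1 ⟨ht.1, htm⟩
        · simp only [htm, if_false]
          exact hEq2 ⟨le_of_not_ge htm, ht.2⟩

/-- Existence and uniqueness on an arbitrary compact interval. -/
theorem exists_unique_Icc (hO : ODE F M) {c d x₀ : ℝ} (hcd : c ≤ d) (hx₀ : x₀ ∈ Icc c d)
    (hM : IntegrableOn M (Icc c d) volume) (w₀ : ℝ × ℝ) :
    ∃ w, SolOn F c d x₀ w₀ w ∧ ∀ w', SolOn F c d x₀ w₀ w' → EqOn w' w (Icc c d) := by
  obtain ⟨n, hn⟩ := exists_nat_ge (2 * ∫ τ in Icc c d, M τ)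
  exact hO.exists_unique_nat n c d x₀ w₀ hcd hx₀ hM (by linarith)

end ODE

/-- `sol` solves the first-order system on all of `S`, in integrated form. -/
def PairSol (F : ℝ → ℝ × ℝ → ℝ × ℝ) (S : Set ℝ) (sol : ℝ → ℝ × ℝ) : Prop :=
  ∀ x ∈ S, ∀ y ∈ S, IntervalIntegrable (fun τ => F τ (sol τ)) volume x y ∧
    sol y - sol x = ∫ τ in x..y, F τ (sol τ)

theorem intervalIntegrable_congr_of_eqOn {E : Type*} [NormedAddCommGroup E] {f g : ℝ → E}
    {x y : ℝ} (h : EqOn f g (uIcc x y)) (hf : IntervalIntegrable f volume x y) :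
    IntervalIntegrable g volume x y := by
  rw [intervalIntegrable_iff] at hf ⊢
  refine hf.congr ?_
  filter_upwards [ae_restrict_mem measurableSet_uIoc] with τ hτ
  exact h (uIoc_subset_uIcc hτ)

namespace ODE

theorem solOn_unique (hO : ODE F M) {c d x₀ : ℝ} (hcd : c ≤ d) (hx₀ : x₀ ∈ Icc c d)
    (hM : IntegrableOn M (Icc c d) volume) {w₀ : ℝ × ℝ} {w1 w2 : ℝ → ℝ × ℝ}
    (h1 : SolOn F c d x₀ w₀ w1) (h2 : SolOn F c d x₀ w₀ w2) : EqOn w1 w2 (Icc c d) := by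
  obtain ⟨w, _, hu⟩ := hO.exists_unique_Icc hcd hx₀ hM w₀
  exact fun t ht => (hu w1 h1 ht).trans (hu w2 h2 ht).symm

theorem global_sol (hO : ODE F M) {S : Set ℝ} (hS : ∀ x ∈ S, ∀ y ∈ S, Icc x y ⊆ S)
    (hMS : ∀ c d, c ∈ S → d ∈ S → IntegrableOn M (Icc c d) volume)
    {x₀ : ℝ} (hx₀ : x₀ ∈ S) (w₀ : ℝ × ℝ) :
    ∃ sol : ℝ → ℝ × ℝ, sol x₀ = w₀ ∧ PairSol F S sol ∧
      (∀ c d, c ∈ S → d ∈ S → ContinuousOn sol (Icc c d)) ∧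
      (∀ g : ℝ → ℝ × ℝ, g x₀ = w₀ → PairSol F S g → EqOn g sol S) := by
  classical
  have hminS : ∀ u v : ℝ, u ∈ S → v ∈ S → min u v ∈ S := by
    intro u v hu hv
    rcases min_choice u v with h | h <;> rw [h] <;> assumption
  have hmaxS : ∀ u v : ℝ, u ∈ S → v ∈ S → max u v ∈ S := by
    intro u v hu hv
    rcases max_choice u v with h | h <;> rw [h] <;> assumption
  have main : ∀ x, x ∈ S → ∃ w, SolOn F (min x₀ x) (max x₀ x) x₀ w₀ w ∧
      ∀ w', SolOn F (min x₀ x) (max x₀ x) x₀ w₀ w' → EqOn w' w (Icc (min x₀ x) (max x₀ x)) := by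
    intro x hx
    exact hO.exists_unique_Icc (min_le_left x₀ x |>.trans (le_max_left x₀ x))
      ⟨min_le_left _ _, le_max_left _ _⟩
      (hMS _ _ (hminS _ _ hx₀ hx) (hmaxS _ _ hx₀ hx)) w₀
  set sol : ℝ → ℝ × ℝ := fun x => if hx : x ∈ S then (main x hx).choose x else 0 with hsol
  -- consistency of the choices with any solution on any subinterval containing x₀
  have consist : ∀ (x : ℝ) (hx : x ∈ S) (c d : ℝ), c ∈ S → d ∈ S → x₀ ∈ Icc c d →
      ∀ w, SolOn F c d x₀ w₀ w → ∀ z, z ∈ Icc c d → z ∈ Icc (min x₀ x) (max x₀ x) →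
      (main x hx).choose z = w z := by
    intro x hx c d hc hd hx₀cd w hw z hz1 hz2
    set c' := max c (min x₀ x) with hc'
    set d' := min d (max x₀ x) with hd'
    have hc'S : c' ∈ S := hmaxS _ _ hc (hminS _ _ hx₀ hx)
    have hd'S : d' ∈ S := hminS _ _ hd (hmaxS _ _ hx₀ hx)
    have hx₀' : x₀ ∈ Icc c' d' :=
      ⟨max_le hx₀cd.1 (min_le_left _ _), le_min hx₀cd.2 (le_max_left _ _)⟩
    have hc'd' : c' ≤ d' := hx₀'.1.trans hx₀'.2
    have hs1 : Icc c' d' ⊆ Icc c d := Icc_subset_Icc (le_max_left _ _) (min_le_left _ _)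
    have hs2 : Icc c' d' ⊆ Icc (min x₀ x) (max x₀ x) :=
      Icc_subset_Icc (le_max_right _ _) (min_le_right _ _)
    have hr1 : SolOn F c' d' x₀ w₀ ((main x hx).choose) :=
      ⟨(main x hx).choose_spec.1.1.mono hs2, fun t ht => (main x hx).choose_spec.1.2 t (hs2 ht)⟩
    have hr2 : SolOn F c' d' x₀ w₀ w := ⟨hw.1.mono hs1, fun t ht => hw.2 t (hs1 ht)⟩
    exact hO.solOn_unique hc'd' hx₀' (hMS c' d' hc'S hd'S) hr1 hr2
      ⟨max_le hz1.1 hz2.1, le_min hz1.2 hz2.2⟩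
  have hsolval : ∀ x (hx : x ∈ S), sol x = (main x hx).choose x := fun x hx => dif_pos hx
  -- sol agrees with any solution on [c,d] ∋ x₀
  have hagree : ∀ (c d : ℝ), c ∈ S → d ∈ S → x₀ ∈ Icc c d →
      ∀ w, SolOn F c d x₀ w₀ w → ∀ z ∈ Icc c d, sol z = w z := by
    intro c d hc hd hx₀cd w hw z hz
    have hzS : z ∈ S := hS c hc d hd hz
    rw [hsolval z hzS]
    exact consist z hzS c d hc hd hx₀cd w hw z hz ⟨min_le_right _ _, le_max_right _ _⟩
  have hsolx₀ : sol x₀ = w₀ := by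
    rw [hsolval x₀ hx₀, (main x₀ hx₀).choose_spec.1.2 x₀ ⟨min_le_left _ _, le_max_left _ _⟩]
    simp
  refine ⟨sol, hsolx₀, ?_, ?_, ?_⟩
  · -- PairSol
    intro x hx y hy
    set c := min x₀ (min x y) with hc
    set d := max x₀ (max x y) with hd
    have hcS : c ∈ S := hminS _ _ hx₀ (hminS _ _ hx hy)
    have hdS : d ∈ S := hmaxS _ _ hx₀ (hmaxS _ _ hx hy)
    have hx₀cd : x₀ ∈ Icc c d := ⟨min_le_left _ _, le_max_left _ _⟩
    have hxcd : x ∈ Icc c d :=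
      ⟨(min_le_right _ _).trans (min_le_left _ _), (le_max_left x y).trans (le_max_right _ _)⟩
    have hycd : y ∈ Icc c d :=
      ⟨(min_le_right _ _).trans (min_le_right _ _), (le_max_right x y).trans (le_max_right _ _)⟩
    have hcd : c ≤ d := hx₀cd.1.trans hx₀cd.2
    have hM := hMS c d hcS hdS
    obtain ⟨w, hw, _⟩ := hO.exists_unique_Icc hcd hx₀cd hM w₀
    have hsw : ∀ z ∈ Icc c d, sol z = w z := hagree c d hcS hdS hx₀cd w hw
    have heq : EqOn (fun τ => F τ (w τ)) (fun τ => F τ (sol τ)) (uIcc x y) := by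
      intro τ hτ
      simp only [hsw τ (uIcc_subset_Icc hxcd hycd hτ)]
    have hIw : IntervalIntegrable (fun τ => F τ (w τ)) volume x y :=
      hO.intervalIntegrable_comp hM hw.1 hxcd hycd
    refine ⟨intervalIntegrable_congr_of_eqOn heq hIw, ?_⟩
    have e1 := hw.2 x hxcd
    have e2 := hw.2 y hycd
    rw [hsw x hxcd, hsw y hycd, e1, e2, add_sub_add_left_eq_sub,
      intervalIntegral.integral_interval_sub_left
        (hO.intervalIntegrable_comp hM hw.1 hx₀cd hycd)
        (hO.intervalIntegrable_comp hM hw.1 hx₀cd hxcd)]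
    exact intervalIntegral.integral_congr heq
  · -- continuity on compact subintervals
    intro c d hc hd
    rcases lt_or_ge d c with h | h
    · rw [Icc_eq_empty (not_le.2 h)]
      exact continuousOn_empty _
    · set c' := min x₀ c with hc'
      set d' := max x₀ d with hd'
      have hc'S : c' ∈ S := hminS _ _ hx₀ hc
      have hd'S : d' ∈ S := hmaxS _ _ hx₀ hd
      have hx₀' : x₀ ∈ Icc c' d' := ⟨min_le_left _ _, le_max_left _ _⟩
      have hcd' : c' ≤ d' := hx₀'.1.trans hx₀'.2
      obtain ⟨w, hw, _⟩ := hO.exists_unique_Icc hcd' hx₀' (hMS c' d' hc'S hd'S) w₀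
      have hsw : ∀ z ∈ Icc c' d', sol z = w z := hagree c' d' hc'S hd'S hx₀' w hw
      have hsub : Icc c d ⊆ Icc c' d' :=
        Icc_subset_Icc (min_le_right _ _) (le_max_right _ _)
      exact (hw.1.mono hsub).congr (fun z hz => hsw z (hsub hz))
  · -- uniqueness
    intro g hgx₀ hg x hx
    set c := min x₀ x with hc
    set d := max x₀ x with hd
    have hcS : c ∈ S := hminS _ _ hx₀ hx
    have hdS : d ∈ S := hmaxS _ _ hx₀ hx
    have hx₀cd : x₀ ∈ Icc c d := ⟨min_le_left _ _, le_max_left _ _⟩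
    have hxcd : x ∈ Icc c d := ⟨min_le_right _ _, le_max_right _ _⟩
    have hcd : c ≤ d := hx₀cd.1.trans hx₀cd.2
    have hIccS : Icc c d ⊆ S := hS c hcS d hdS
    have hsolg : SolOn F c d x₀ w₀ g := by
      constructor
      · -- continuity from the integral representation
        have hint : IntegrableOn (fun τ => F τ (g τ)) (Icc c d) volume := by
          have := (hg c hcS d hdS).1
          rw [intervalIntegrable_iff] at this
          rw [integrableOn_Icc_iff_integrableOn_Ioc]
          exact this.mono_set (by rw [uIoc_of_le hcd])
        have hprim : ContinuousOn (fun t : ℝ => ∫ τ in c..t, F τ (g τ)) (Icc c d) := by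
          have := continuousOn_primitive_interval (a := c) (b := d)
            (f := fun τ => F τ (g τ)) (μ := volume) (by rwa [uIcc_of_le hcd])
          rwa [uIcc_of_le hcd] at this
        refine ContinuousOn.congr ((continuousOn_const (c := g c)).add hprim) (fun t ht => ?_)
        have h2 := eq_add_of_sub_eq (hg c hcS t (hIccS ht)).2
        rw [add_comm] at h2
        exact h2
      · intro t ht
        have h' := (hg x₀ hx₀ t (hIccS ht)).2
        rw [hgx₀] at h'
        have h2 := eq_add_of_sub_eq h'
        rw [add_comm] at h2
        exact h2
    rw [hsolval x hx]
    exact (consist x hx c d hcS hdS hx₀cd g hsolg x hxcd hxcd).symm ▸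
      ((main x hx).choose_spec.2 g hsolg hxcd)

end ODE

namespace ODE

theorem pairSol_add (hO : ODE F M) {S : Set ℝ} {f g : ℝ → ℝ × ℝ}
    (hf : PairSol F S f) (hg : PairSol F S g) : PairSol F S (fun t => f t + g t) := by
  intro x hx y hy
  have hFeq : (fun τ => F τ (f τ + g τ)) = fun τ => F τ (f τ) + F τ (g τ) :=
    funext fun τ => hO.hadd τ _ _
  have hint : IntervalIntegrable (fun τ => F τ (f τ + g τ)) volume x y := by
    rw [hFeq]
    exact ((hf x hx y hy).1).add ((hg x hx y hy).1)
  refine ⟨hint, ?_⟩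
  have := intervalIntegral.integral_add ((hf x hx y hy).1) ((hg x hx y hy).1)
  calc f y + g y - (f x + g x) = (f y - f x) + (g y - g x) := by abel
    _ = (∫ τ in x..y, F τ (f τ)) + (∫ τ in x..y, F τ (g τ)) := by
        rw [(hf x hx y hy).2, (hg x hx y hy).2]
    _ = ∫ τ in x..y, F τ (f τ) + F τ (g τ) := this.symm
    _ = ∫ τ in x..y, F τ (f τ + g τ) := by rw [hFeq]

theorem pairSol_smul (hO : ODE F M) {S : Set ℝ} {f : ℝ → ℝ × ℝ} (k : ℝ)
    (hf : PairSol F S f) : PairSol F S (fun t => k • f t) := by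
  intro x hx y hy
  have hFeq : (fun τ => F τ (k • f τ)) = fun τ => k • F τ (f τ) :=
    funext fun τ => hO.hsmul τ _ _
  have hint : IntervalIntegrable (fun τ => F τ (k • f τ)) volume x y := by
    rw [hFeq]
    exact ((hf x hx y hy).1).smul k
  refine ⟨hint, ?_⟩
  calc k • f y - k • f x = k • (f y - f x) := by rw [smul_sub]
    _ = k • ∫ τ in x..y, F τ (f τ) := by rw [(hf x hx y hy).2]
    _ = ∫ τ in x..y, k • F τ (f τ) := (intervalIntegral.integral_smul k _).symm
    _ = ∫ τ in x..y, F τ (k • f τ) := by rw [hFeq]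

theorem pairSol_sub (hO : ODE F M) {S : Set ℝ} {f g : ℝ → ℝ × ℝ}
    (hf : PairSol F S f) (hg : PairSol F S g) : PairSol F S (fun t => f t - g t) := by
  have := hO.pairSol_add hf (hO.pairSol_smul (-1) hg)
  simpa [sub_eq_add_neg] using this

end ODE

end ODEAux

section Bridge

open ODE

variable {a b : EReal} {p q r s : ℝ → ℝ} {lam : ℝ}

/-- The coefficient matrix of the first-order system equivalent to `(τ - lam) u = 0`. -/
noncomputable def Fsys (p q r s : ℝ → ℝ) (lam : ℝ) : ℝ → ℝ × ℝ → ℝ × ℝ :=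
  fun t w => ((1 / p t) * w.2 - s t * w.1, s t * w.2 + (q t - lam * r t) * w.1)

/-- A dominating integrable bound for the system. -/
noncomputable def Msys (p q r s : ℝ → ℝ) (lam : ℝ) : ℝ → ℝ :=
  fun t => |1 / p t| + |s t| + |q t - lam * r t|

theorem EI_isOpen (a b : EReal) : IsOpen (EI a b) := by
  have : EI a b = Real.toEReal ⁻¹' (Set.Ioo a b) := rfl
  rw [this]
  exact (isOpen_Ioo).preimage continuous_coe_real_ereal

theorem EI_Icc_subset {x y : ℝ} (hx : x ∈ EI a b) (hy : y ∈ EI a b) :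
    Icc x y ⊆ EI a b := by
  intro t ht
  exact ⟨lt_of_lt_of_le hx.1 (EReal.coe_le_coe_iff.2 ht.1),
    lt_of_le_of_lt (EReal.coe_le_coe_iff.2 ht.2) hy.2⟩

theorem Msys_integrableOn (H : SLH a b p q r s) (lam : ℝ) {c d : ℝ}
    (hc : c ∈ EI a b) (hd : d ∈ EI a b) :
    IntegrableOn (Msys p q r s lam) (Icc c d) volume := by
  have hsub : Icc c d ⊆ EI a b := EI_Icc_subset hc hd
  have h1 : IntegrableOn (fun x => 1 / p x) (Icc c d) volume :=
    H.invp_loc.integrableOn_compact_subset hsub isCompact_Icc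
  have h2 : IntegrableOn s (Icc c d) volume :=
    H.s_loc.integrableOn_compact_subset hsub isCompact_Icc
  have h3 : IntegrableOn (fun x => q x - lam * r x) (Icc c d) volume :=
    (H.q_loc.integrableOn_compact_subset hsub isCompact_Icc).sub
      ((H.r_loc.integrableOn_compact_subset hsub isCompact_Icc).const_mul lam)
  exact (h1.abs.add h2.abs).add h3.abs

theorem ode_sys (H : SLH a b p q r s) (lam : ℝ) :
    ODE (Fsys p q r s lam) (Msys p q r s lam) := by
  constructor
  · intro t
    have := abs_nonneg (1 / p t)
    have := abs_nonneg (s t)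
    have := abs_nonneg (q t - lam * r t)
    unfold Msys
    linarith
  · intro t u v
    have hdiff : Fsys p q r s lam t u - Fsys p q r s lam t v =
        ((1 / p t) * (u - v).2 - s t * (u - v).1,
          s t * (u - v).2 + (q t - lam * r t) * (u - v).1) := by
      simp only [Fsys, Prod.mk_sub_mk, Prod.fst_sub, Prod.snd_sub, Prod.mk.injEq]
      constructor <;> ring
    rw [hdiff]
    have h1 : |(u - v).1| ≤ ‖u - v‖ := norm_fst_le (u - v)
    have h2 : |(u - v).2| ≤ ‖u - v‖ := norm_snd_le (u - v)
    rw [Prod.norm_def]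
    have hnn : (0 : ℝ) ≤ ‖u - v‖ := norm_nonneg _
    refine max_le ?_ ?_
    · calc ‖(1 / p t) * (u - v).2 - s t * (u - v).1‖
          ≤ |(1 / p t) * (u - v).2| + |s t * (u - v).1| := abs_sub _ _
        _ = |1 / p t| * |(u - v).2| + |s t| * |(u - v).1| := by rw [abs_mul, abs_mul]
        _ ≤ |1 / p t| * ‖u - v‖ + |s t| * ‖u - v‖ := by
            refine add_le_add (mul_le_mul_of_nonneg_left h2 (abs_nonneg _))
              (mul_le_mul_of_nonneg_left h1 (abs_nonneg _))
        _ ≤ Msys p q r s lam t * ‖u - v‖ := by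
            unfold Msys
            nlinarith [abs_nonneg (q t - lam * r t)]
    · calc ‖s t * (u - v).2 + (q t - lam * r t) * (u - v).1‖
          ≤ |s t * (u - v).2| + |(q t - lam * r t) * (u - v).1| := abs_add_le _ _
        _ = |s t| * |(u - v).2| + |q t - lam * r t| * |(u - v).1| := by rw [abs_mul, abs_mul]
        _ ≤ |s t| * ‖u - v‖ + |q t - lam * r t| * ‖u - v‖ := by
            refine add_le_add (mul_le_mul_of_nonneg_left h2 (abs_nonneg _))
              (mul_le_mul_of_nonneg_left h1 (abs_nonneg _))
        _ ≤ Msys p q r s lam t * ‖u - v‖ := by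
            unfold Msys
            nlinarith [abs_nonneg (1 / p t)]
  · intro t
    simp [Fsys]
  · intro t u v
    simp only [Fsys, Prod.fst_add, Prod.snd_add, Prod.mk_add_mk, Prod.mk.injEq]
    constructor <;> ring
  · intro t k u
    simp only [Fsys, Prod.smul_fst, Prod.smul_snd, Prod.smul_mk, smul_eq_mul, Prod.mk.injEq]
    constructor <;> ring
  · intro w hw
    have h1 : Measurable fun t => (w t).1 := measurable_fst.comp hw
    have h2 : Measurable fun t => (w t).2 := measurable_snd.comp hw
    refine Measurable.prodMk ?_ ?_
    · exact ((measurable_const.div H.measp).mul h2).sub (H.meass.mul h1)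
    · exact (H.meass.mul h2).add ((H.measq.sub (measurable_const.mul H.measr)).mul h1)

theorem uIcc_subset_EI {x y : ℝ} (hx : x ∈ EI a b) (hy : y ∈ EI a b) :
    uIcc x y ⊆ EI a b := by
  rcases le_total x y with h | h
  · rw [uIcc_of_le h]; exact EI_Icc_subset hx hy
  · rw [uIcc_of_ge h]; exact EI_Icc_subset hy hx

theorem isSolutionWith_of_pairSol (H : SLH a b p q r s) (lam : ℝ) {sol : ℝ → ℝ × ℝ}
    (hps : PairSol (Fsys p q r s lam) (EI a b) sol) :
    IsSolutionWith (EI a b) p q r s lam (fun t => (sol t).1)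
      (fun t => (Fsys p q r s lam t (sol t)).1) (fun t => (sol t).2)
      (fun t => (Fsys p q r s lam t (sol t)).2) := by
  have key : ∀ (L : (ℝ × ℝ) →L[ℝ] ℝ), ∀ x ∈ EI a b, ∀ y ∈ EI a b,
      IntervalIntegrable (fun τ => L (Fsys p q r s lam τ (sol τ))) volume x y ∧
      L (sol y) - L (sol x) = ∫ τ in x..y, L (Fsys p q r s lam τ (sol τ)) := by
    intro L x hx y hy
    obtain ⟨hi, he⟩ := hps x hx y hy
    refine ⟨⟨L.integrable_comp hi.1, L.integrable_comp hi.2⟩, ?_⟩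
    rw [← L.map_sub, he, ContinuousLinearMap.intervalIntegral_comp_comm L hi]
  refine ⟨⟨?_, ?_, ?_⟩, ?_⟩
  · exact fun x hx y hy => key (ContinuousLinearMap.fst ℝ ℝ ℝ) x hx y hy
  · filter_upwards [H.ppos] with t htp hti
    have hp : p t ≠ 0 := ne_of_gt (htp hti)
    show (sol t).2 = p t * ((Fsys p q r s lam t (sol t)).1 + s t * (sol t).1)
    simp only [Fsys]
    field_simp
    ring
  · exact fun x hx y hy => key (ContinuousLinearMap.snd ℝ ℝ ℝ) x hx y hy
  · filter_upwards [H.rpos] with t htr hti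
    have hr : r t ≠ 0 := ne_of_gt (htr hti)
    show tauApp q r s (fun t => (sol t).1) (fun t => (sol t).2)
      (fun t => (Fsys p q r s lam t (sol t)).2) t = lam * (sol t).1
    simp only [tauApp, Fsys]
    field_simp
    ring

theorem pairSol_of_isSolutionWith (H : SLH a b p q r s) (lam : ℝ) {u ud u1 u1d : ℝ → ℝ}
    (hs : IsSolutionWith (EI a b) p q r s lam u ud u1 u1d) :
    PairSol (Fsys p q r s lam) (EI a b) (fun t => (u t, u1 t)) := by
  obtain ⟨⟨h1, h2, h3⟩, h4⟩ := hs
  have hae : ∀ᵐ t ∂(volume : Measure ℝ), t ∈ EI a b →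
      (ud t, u1d t) = Fsys p q r s lam t (u t, u1 t) := by
    filter_upwards [h2, h4, H.ppos, H.rpos] with t ht2 ht4 htp htr hti
    have hp : p t ≠ 0 := ne_of_gt (htp hti)
    have hr : r t ≠ 0 := ne_of_gt (htr hti)
    have e1 : ud t = 1 / p t * u1 t - s t * u t := by
      rw [ht2 hti]
      field_simp
      ring
    have e2 : u1d t = s t * u1 t + (q t - lam * r t) * u t := by
      have h5 := ht4 hti
      unfold tauApp at h5
      field_simp at h5
      linarith
    simp only [Fsys, Prod.mk.injEq]
    exact ⟨e1, e2⟩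
  intro x hx y hy
  have huIcc : uIcc x y ⊆ EI a b := uIcc_subset_EI hx hy
  have hiud := (h1 x hx y hy).1
  have hiu1d := (h3 x hx y hy).1
  have hA : ∀ x' y' : ℝ, Ioc x' y' ⊆ EI a b →
      (fun τ => (ud τ, u1d τ)) =ᵐ[volume.restrict (Ioc x' y')]
      (fun τ => Fsys p q r s lam τ (u τ, u1 τ)) := by
    intro x' y' hsub
    filter_upwards [ae_restrict_mem measurableSet_Ioc, ae_restrict_of_ae hae] with τ hτ1 hτ2
    exact hτ2 (hsub hτ1)
  have hIoc1 : Ioc x y ⊆ EI a b :=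
    (Ioc_subset_Icc_self.trans Icc_subset_uIcc).trans huIcc
  have hIoc2 : Ioc y x ⊆ EI a b :=
    (Ioc_subset_Icc_self.trans Icc_subset_uIcc).trans (uIcc_subset_EI hy hx)
  have hiF : IntervalIntegrable (fun τ => Fsys p q r s lam τ (u τ, u1 τ)) volume x y :=
    ⟨(hiud.1.prodMk hiu1d.1).congr (hA x y hIoc1),
      (hiud.2.prodMk hiu1d.2).congr (hA y x hIoc2)⟩
  refine ⟨hiF, ?_⟩
  have haeΙ : ∀ᵐ τ ∂(volume : Measure ℝ), τ ∈ uIoc x y →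
      (ud τ, u1d τ) = Fsys p q r s lam τ (u τ, u1 τ) := by
    filter_upwards [hae] with τ hτ hτΙ
    exact hτ (huIcc (uIoc_subset_uIcc hτΙ))
  have hfst := ContinuousLinearMap.intervalIntegral_comp_comm
    (ContinuousLinearMap.fst ℝ ℝ ℝ) hiF
  have hsnd := ContinuousLinearMap.intervalIntegral_comp_comm
    (ContinuousLinearMap.snd ℝ ℝ ℝ) hiF
  have e1 : (∫ τ in x..y, Fsys p q r s lam τ (u τ, u1 τ)).1 = ∫ τ in x..y, ud τ := by
    show (ContinuousLinearMap.fst ℝ ℝ ℝ) (∫ τ in x..y, Fsys p q r s lam τ (u τ, u1 τ)) =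
      ∫ τ in x..y, ud τ
    rw [← hfst]
    refine intervalIntegral.integral_congr_ae ?_
    filter_upwards [haeΙ] with τ hτ hτΙ
    exact congrArg Prod.fst (hτ hτΙ).symm
  have e2 : (∫ τ in x..y, Fsys p q r s lam τ (u τ, u1 τ)).2 = ∫ τ in x..y, u1d τ := by
    show (ContinuousLinearMap.snd ℝ ℝ ℝ) (∫ τ in x..y, Fsys p q r s lam τ (u τ, u1 τ)) =
      ∫ τ in x..y, u1d τ
    rw [← hsnd]
    refine intervalIntegral.integral_congr_ae ?_
    filter_upwards [haeΙ] with τ hτ hτΙ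
    exact congrArg Prod.snd (hτ hτΙ).symm
  have g1 := (h1 x hx y hy).2
  have g2 := (h3 x hx y hy).2
  refine Prod.ext ?_ ?_
  · rw [e1, Prod.fst_sub]
    exact g1
  · rw [e2, Prod.snd_sub]
    exact g2

theorem pairSol_zero (H : SLH a b p q r s) (lam : ℝ) :
    PairSol (Fsys p q r s lam) (EI a b) (fun _ => (0 : ℝ × ℝ)) := by
  intro x hx y hy
  have h0 : (fun τ => Fsys p q r s lam τ (0 : ℝ × ℝ)) = fun _ => (0 : ℝ × ℝ) :=
    funext fun τ => (ode_sys H lam).hF0 τ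
  constructor
  · rw [h0]
    exact intervalIntegrable_const
  · rw [h0]
    simp

theorem fst_eq_zero_contra (H : SLH a b p q r s) (lam : ℝ) {sol : ℝ → ℝ × ℝ}
    (hps : PairSol (Fsys p q r s lam) (EI a b) sol)
    (hcont : ∀ c d : ℝ, c ∈ EI a b → d ∈ EI a b → ContinuousOn sol (Icc c d))
    {x₁ : ℝ} (hx₁ : x₁ ∈ EI a b) (hβ : (sol x₁).2 ≠ 0)
    (hall : ∀ x ∈ EI a b, (sol x).1 = 0) : False := by
  set β := (sol x₁).2 with hβdef
  -- find a closed interval around x₁ inside EI a b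
  obtain ⟨ε, hε, hball⟩ := Metric.isOpen_iff.1 (EI_isOpen a b) x₁ hx₁
  set δ₀ := ε / 2 with hδ₀
  have hδ₀pos : 0 < δ₀ := by positivity
  have hIccEI : Icc (x₁ - δ₀) (x₁ + δ₀) ⊆ EI a b := by
    intro t ht
    apply hball
    rw [Metric.mem_ball, Real.dist_eq, abs_lt]
    constructor <;> [linarith [ht.1]; linarith [ht.2]]
  have hmem1 : x₁ - δ₀ ∈ EI a b := hIccEI ⟨le_rfl, by linarith⟩
  have hmem2 : x₁ + δ₀ ∈ EI a b := hIccEI ⟨by linarith, le_rfl⟩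
  have hx₁Icc : x₁ ∈ Icc (x₁ - δ₀) (x₁ + δ₀) := ⟨by linarith, by linarith⟩
  have hc : ContinuousOn sol (Icc (x₁ - δ₀) (x₁ + δ₀)) := hcont _ _ hmem1 hmem2
  have hf : ContinuousOn (fun t => (sol t).2) (Icc (x₁ - δ₀) (x₁ + δ₀)) :=
    continuous_snd.comp_continuousOn hc
  -- choose δ so that the second component stays close to β
  obtain ⟨δ₁, hδ₁pos, hδ₁⟩ := (Metric.continuousOn_iff.1 hf) x₁ hx₁Icc (|β| / 2)
    (by positivity)
  set δ := min δ₀ (δ₁ / 2) with hδdef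
  have hδpos : 0 < δ := lt_min hδ₀pos (by positivity)
  have hδle : δ ≤ δ₀ := min_le_left _ _
  have hx₁δ : x₁ + δ ∈ EI a b := hIccEI ⟨by linarith, by linarith⟩
  have hclose : ∀ τ ∈ Icc x₁ (x₁ + δ), |(sol τ).2 - β| < |β| / 2 := by
    intro τ hτ
    have hτIcc : τ ∈ Icc (x₁ - δ₀) (x₁ + δ₀) := ⟨by linarith [hτ.1], by linarith [hτ.2]⟩
    have hdist : dist τ x₁ < δ₁ := by
      rw [Real.dist_eq, abs_lt]
      have := min_le_right δ₀ (δ₁ / 2)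
      constructor <;> [linarith [hτ.1]; linarith [hτ.2]]
    have := hδ₁ τ hτIcc hdist
    rwa [Real.dist_eq] at this
  have hββ : 0 < β * β := mul_self_pos.2 hβ
  have hfpos : ∀ τ ∈ Icc x₁ (x₁ + δ), β * β / 2 ≤ (sol τ).2 * β := by
    intro τ hτ
    have h1 := hclose τ hτ
    have h2 : |((sol τ).2 - β) * β| ≤ |β| / 2 * |β| := by
      rw [abs_mul]
      exact mul_le_mul_of_nonneg_right h1.le (abs_nonneg _)
    have h3 : -(|β| / 2 * |β|) ≤ ((sol τ).2 - β) * β := neg_le_of_abs_le h2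
    have h4 : |β| * |β| = β * β := by rw [← abs_mul, abs_mul_self]
    have h5 : ((sol τ).2 - β) * β = (sol τ).2 * β - β * β := by ring
    have h6 : |β| / 2 * |β| = |β| * |β| / 2 := by ring
    rw [h6, h4] at h3
    linarith
  -- the integral of the first component of the system vanishes
  set J := Ioc x₁ (x₁ + δ) with hJ
  have hJEI : J ⊆ EI a b := fun t ht =>
    hIccEI ⟨by linarith [ht.1.le], by linarith [ht.2]⟩
  obtain ⟨hiF, heF⟩ := hps x₁ hx₁ (x₁ + δ) hx₁δ
  set g : ℝ → ℝ := fun τ => (Fsys p q r s lam τ (sol τ)).1 with hg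
  have hig : IntervalIntegrable g volume x₁ (x₁ + δ) :=
    ⟨(ContinuousLinearMap.fst ℝ ℝ ℝ).integrable_comp hiF.1,
      (ContinuousLinearMap.fst ℝ ℝ ℝ).integrable_comp hiF.2⟩
  have h0 : (∫ τ in x₁..(x₁ + δ), g τ) = 0 := by
    have hfsteq := ContinuousLinearMap.intervalIntegral_comp_comm
      (ContinuousLinearMap.fst ℝ ℝ ℝ) hiF
    have : (∫ τ in x₁..(x₁ + δ), g τ) = (sol (x₁ + δ)).1 - (sol x₁).1 := by
      show (∫ τ in x₁..(x₁ + δ),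
        (ContinuousLinearMap.fst ℝ ℝ ℝ) (Fsys p q r s lam τ (sol τ))) = _
      rw [hfsteq, ← heF]
      rfl
    rw [this, hall _ hx₁δ, hall _ hx₁]
    ring
  have h0' : (∫ τ in J, g τ) = 0 := by
    rw [← intervalIntegral.integral_of_le (by linarith : x₁ ≤ x₁ + δ)]
    exact h0
  -- multiply by β
  set h : ℝ → ℝ := fun τ => g τ * β with hh
  have hinth : IntegrableOn h J volume := by
    have : IntegrableOn g J volume := hig.1
    exact this.mul_const β
  have h0'' : (∫ τ in J, h τ) = 0 := by
    rw [hh]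
    simp only
    rw [MeasureTheory.integral_mul_const, h0', zero_mul]
  have hpos : ∀ᵐ τ ∂(volume.restrict J), 0 < h τ := by
    filter_upwards [ae_restrict_mem measurableSet_Ioc, ae_restrict_of_ae H.ppos]
      with τ hτJ hτp
    have hτEI : τ ∈ EI a b := hJEI hτJ
    have hp : 0 < p τ := hτp hτEI
    have h1 : g τ = (1 / p τ) * (sol τ).2 := by
      rw [hg]
      simp only [Fsys, hall τ hτEI, mul_zero, sub_zero]
    have h2 : β * β / 2 ≤ (sol τ).2 * β :=
      hfpos τ ⟨hτJ.1.le, hτJ.2⟩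
    have h3 : 0 < 1 / p τ := by positivity
    calc (0 : ℝ) < (1 / p τ) * (β * β / 2) := by positivity
      _ ≤ (1 / p τ) * ((sol τ).2 * β) := mul_le_mul_of_nonneg_left h2 h3.le
      _ = h τ := by rw [hh]; simp only; rw [h1]; ring
  have hzero : h =ᵐ[volume.restrict J] 0 := by
    refine (integral_eq_zero_iff_of_nonneg_ae ?_ hinth).1 h0''
    filter_upwards [hpos] with τ hτ
    exact hτ.le
  have hfalse : ∀ᵐ τ ∂(volume.restrict J), False := by
    filter_upwards [hpos, hzero] with τ h1 h2
    rw [h2] at h1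
    exact lt_irrefl 0 h1
  have hJ0 : volume J = 0 := by
    have h1 := ae_iff.1 hfalse
    simp only [not_false_iff, setOf_true] at h1
    rwa [Measure.restrict_apply_univ] at h1
  have : volume J = ENNReal.ofReal δ := by
    rw [hJ, Real.volume_Ioc]
    congr 1
    ring
  rw [this] at hJ0
  exact (ENNReal.ofReal_pos.2 hδpos).ne' hJ0

end Bridge


/-- Theorem 4.2 (i) ⇔ (ii): `τ - λ` is disconjugate on `(a,b)` if and only if for every
pair of distinct points `x₁, x₂ ∈ (a,b)` and arbitrary values `u₁, u₂ ∈ ℝ` there exists a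
unique real-valued solution `u*` of `(τ - λ) u = 0` on `(a,b)` with `u*(x₁) = u₁` and
`u*(x₂) = u₂` (uniqueness as functions on `(a,b)`). -/
theorem disconjugate_iff_two_point_interpolation
    (a b : EReal) (p q r s : ℝ → ℝ) (H : SLH a b p q r s) (lam : ℝ) :
    Disconjugate (EI a b) p q r s lam ↔
      ∀ x₁ ∈ EI a b, ∀ x₂ ∈ EI a b, x₁ ≠ x₂ → ∀ u₁ u₂ : ℝ,
        ∃ ustar : ℝ → ℝ, IsSolution (EI a b) p q r s lam ustar ∧
          ustar x₁ = u₁ ∧ ustar x₂ = u₂ ∧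
          ∀ v : ℝ → ℝ, IsSolution (EI a b) p q r s lam v →
            v x₁ = u₁ → v x₂ = u₂ → Set.EqOn v ustar (EI a b) := by
  constructor
  · -- disconjugacy implies unique interpolation
    intro hD x₁ hx₁ x₂ hx₂ hne u₁ u₂
    have hO := ode_sys H lam
    have hS : ∀ x ∈ EI a b, ∀ y ∈ EI a b, Icc x y ⊆ EI a b :=
      fun x hx y hy => EI_Icc_subset hx hy
    have hMS : ∀ c d : ℝ, c ∈ EI a b → d ∈ EI a b →
        IntegrableOn (Msys p q r s lam) (Icc c d) volume :=
      fun c d hc hd => Msys_integrableOn H lam hc hd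
    obtain ⟨E1, hE1x, hE1p, hE1c, hE1u⟩ := hO.global_sol hS hMS hx₁ ((1 : ℝ), (0 : ℝ))
    obtain ⟨E2, hE2x, hE2p, hE2c, hE2u⟩ := hO.global_sol hS hMS hx₁ ((0 : ℝ), (1 : ℝ))
    have hB : (E2 x₂).1 ≠ 0 := by
      intro hB0
      have hsol : IsSolution (EI a b) p q r s lam (fun t => (E2 t).1) :=
        ⟨_, _, _, isSolutionWith_of_pairSol H lam hE2p⟩
      by_cases hnt : NontrivOn (EI a b) (fun t => (E2 t).1)
      · refine hne (hD _ hsol hnt x₁ hx₁ x₂ hx₂ ?_ hB0)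
        rw [hE2x]
      · have hall : ∀ x ∈ EI a b, (E2 x).1 = 0 := by
          intro x hx
          by_contra hne'
          exact hnt ⟨x, hx, hne'⟩
        refine fst_eq_zero_contra H lam hE2p hE2c hx₁ ?_ hall
        rw [hE2x]
        norm_num
    set βc := (u₂ - u₁ * (E1 x₂).1) / (E2 x₂).1 with hβc
    have hpstar : PairSol (Fsys p q r s lam) (EI a b) (fun t => u₁ • E1 t + βc • E2 t) :=
      hO.pairSol_add (hO.pairSol_smul u₁ hE1p) (hO.pairSol_smul βc hE2p)
    have hsolstar : IsSolution (EI a b) p q r s lam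
        (fun t => (u₁ • E1 t + βc • E2 t).1) :=
      ⟨_, _, _, isSolutionWith_of_pairSol H lam hpstar⟩
    have hval1 : (u₁ • E1 x₁ + βc • E2 x₁).1 = u₁ := by
      rw [hE1x, hE2x]
      simp
    have hval2 : (u₁ • E1 x₂ + βc • E2 x₂).1 = u₂ := by
      rw [Prod.fst_add, Prod.smul_fst, Prod.smul_fst, smul_eq_mul, smul_eq_mul, hβc,
        div_mul_cancel₀ _ hB]
      ring
    refine ⟨fun t => (u₁ • E1 t + βc • E2 t).1, hsolstar, hval1, hval2, ?_⟩
    intro v hv hv1 hv2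
    obtain ⟨vd, v1, v1d, hvw⟩ := hv
    have hpv : PairSol (Fsys p q r s lam) (EI a b) (fun t => (v t, v1 t)) :=
      pairSol_of_isSolutionWith H lam hvw
    set ρ := v1 x₁ - βc with hρdef
    have hpdiff : PairSol (Fsys p q r s lam) (EI a b)
        (fun t => (v t, v1 t) - (u₁ • E1 t + βc • E2 t)) :=
      hO.pairSol_sub hpv hpstar
    have hdiffx₁ : (v x₁, v1 x₁) - (u₁ • E1 x₁ + βc • E2 x₁) = ((0 : ℝ), ρ) := by
      rw [hE1x, hE2x, hv1]
      simp only [Prod.smul_mk, smul_eq_mul, Prod.mk_add_mk, Prod.mk_sub_mk, Prod.mk.injEq]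
      constructor <;> [ring; (rw [hρdef]; ring)]
    obtain ⟨E3, hE3x, hE3p, hE3c, hE3u⟩ := hO.global_sol hS hMS hx₁ ((0 : ℝ), ρ)
    have h1 : EqOn (fun t => (v t, v1 t) - (u₁ • E1 t + βc • E2 t)) E3 (EI a b) :=
      hE3u _ hdiffx₁ hpdiff
    have hzx : ρ • E2 x₁ = ((0 : ℝ), ρ) := by
      rw [hE2x]
      simp
    have h2 : EqOn (fun t => ρ • E2 t) E3 (EI a b) :=
      hE3u _ hzx (hO.pairSol_smul ρ hE2p)
    have hρ0 : ρ = 0 := by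
      have e1 : ((v x₂, v1 x₂) - (u₁ • E1 x₂ + βc • E2 x₂)).1 = 0 := by
        rw [Prod.fst_sub, hval2, hv2]
        ring
      have e2 : ((v x₂, v1 x₂) - (u₁ • E1 x₂ + βc • E2 x₂)).1 = ρ * (E2 x₂).1 := by
        have h3 : (v x₂, v1 x₂) - (u₁ • E1 x₂ + βc • E2 x₂) = ρ • E2 x₂ :=
          (h1 hx₂).trans (h2 hx₂).symm
        rw [h3, Prod.smul_fst, smul_eq_mul]
      rw [e1] at e2
      rcases mul_eq_zero.1 e2.symm with h | h
      · exact h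
      · exact absurd h hB
    intro t ht
    have h3 : (v t, v1 t) - (u₁ • E1 t + βc • E2 t) = ρ • E2 t :=
      (h1 ht).trans (h2 ht).symm
    rw [hρ0, zero_smul] at h3
    have h4 : ((v t, v1 t) - (u₁ • E1 t + βc • E2 t)).1 = 0 := by
      rw [h3]
      rfl
    rw [Prod.fst_sub] at h4
    have : (v t, v1 t).1 = v t := rfl
    rw [this] at h4
    linarith [h4]
  · -- unique interpolation implies disconjugacy
    intro hI u hsol hnt x hx y hy hux huy
    by_contra hne
    obtain ⟨ustar, _, _, _, huniq⟩ := hI x hx y hy hne 0 0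
    have h1 : EqOn u ustar (EI a b) := huniq u hsol hux huy
    have hzero : IsSolution (EI a b) p q r s lam (fun _ => (0 : ℝ)) :=
      ⟨_, _, _, isSolutionWith_of_pairSol H lam (pairSol_zero H lam)⟩
    have h2 : EqOn (fun _ => (0 : ℝ)) ustar (EI a b) := huniq _ hzero rfl rfl
    obtain ⟨z, hz, hz0⟩ := hnt
    exact hz0 ((h1 hz).trans (h2 hz).symm)
end

section
/- Disconjugacy equals nonvanishing of the two-point determinant (Theorem 4.2, (i)⇔(iii)): Assume Hypothesis (H) and let λ ∈ ℝ. Then τ − λ is disconjugate on (a,b) if and only if every pair of real-valued linearly independent solutions u₁, u₂ of (τ − λ)u = 0 on (a,b) satisfies u₁(x₁)·u₂(x₂) − u₁(x₂)·u₂(x₁) ≠ 0 for every pair of points x₁, x₂ ∈ (a,b) with x₁ ≠ x₂. -/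
open MeasureTheory Set Filter intervalIntegral

noncomputable section SLEdev
open MeasureTheory Set intervalIntegral
open scoped Interval

variable (a₁ a₂ a₃ a₄ : ℝ → ℝ)

def SLE.NN (t : ℝ) (Y : ℝ × ℝ) : ℝ × ℝ :=
  (a₁ t * Y.1 + a₂ t * Y.2, a₃ t * Y.1 + a₄ t * Y.2)

def SLE.MM (t : ℝ) : ℝ := |a₁ t| + |a₂ t| + |a₃ t| + |a₄ t|

namespace SLE

lemma MM_nonneg (t : ℝ) : 0 ≤ MM a₁ a₂ a₃ a₄ t := by
  unfold MM; positivity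

lemma norm_NN_le (t : ℝ) (Y : ℝ × ℝ) :
    ‖NN a₁ a₂ a₃ a₄ t Y‖ ≤ MM a₁ a₂ a₃ a₄ t * ‖Y‖ := by
  have h1 : |Y.1| ≤ ‖Y‖ := by
    rw [Prod.norm_def]; exact le_max_of_le_left le_rfl
  have h2 : |Y.2| ≤ ‖Y‖ := by
    rw [Prod.norm_def]; exact le_max_of_le_right le_rfl
  have hY : 0 ≤ ‖Y‖ := norm_nonneg _
  have key : ∀ u v : ℝ, |u| + |v| ≤ MM a₁ a₂ a₃ a₄ t → ‖u * Y.1 + v * Y.2‖ ≤ MM a₁ a₂ a₃ a₄ t * ‖Y‖ := by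
    intro u v huv
    rw [Real.norm_eq_abs]
    nlinarith [abs_add_le (u * Y.1) (v * Y.2), abs_mul u Y.1, abs_mul v Y.2,
      mul_le_mul_of_nonneg_left h1 (abs_nonneg u), mul_le_mul_of_nonneg_left h2 (abs_nonneg v),
      abs_nonneg u, abs_nonneg v]
  have e1 : ‖a₁ t * Y.1 + a₂ t * Y.2‖ ≤ MM a₁ a₂ a₃ a₄ t * ‖Y‖ := by
    refine key _ _ ?_; unfold MM; nlinarith [abs_nonneg (a₃ t), abs_nonneg (a₄ t)]
  have e2 : ‖a₃ t * Y.1 + a₄ t * Y.2‖ ≤ MM a₁ a₂ a₃ a₄ t * ‖Y‖ := by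
    refine key _ _ ?_; unfold MM; nlinarith [abs_nonneg (a₁ t), abs_nonneg (a₂ t)]
  rw [NN, Prod.norm_def]
  exact max_le e1 e2

lemma NN_sub (t : ℝ) (Y Z : ℝ × ℝ) :
    NN a₁ a₂ a₃ a₄ t Y - NN a₁ a₂ a₃ a₄ t Z = NN a₁ a₂ a₃ a₄ t (Y - Z) := by
  simp only [NN, Prod.mk_sub_mk, Prod.fst_sub, Prod.snd_sub]
  refine Prod.ext ?_ ?_ <;> simp <;> ring

lemma integrableOn_NN {K : Set ℝ} (hK : IsCompact K)
    (h1 : IntegrableOn a₁ K volume) (h2 : IntegrableOn a₂ K volume)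
    (h3 : IntegrableOn a₃ K volume) (h4 : IntegrableOn a₄ K volume)
    {Y : ℝ → ℝ × ℝ} (hY : ContinuousOn Y K) :
    IntegrableOn (fun τ => NN a₁ a₂ a₃ a₄ τ (Y τ)) K volume := by
  have hY1 : ContinuousOn (fun τ => (Y τ).1) K := continuous_fst.comp_continuousOn hY
  have hY2 : ContinuousOn (fun τ => (Y τ).2) K := continuous_snd.comp_continuousOn hY
  exact Integrable.prodMk
    ((h1.mul_continuousOn hY1 hK).add (h2.mul_continuousOn hY2 hK))
    ((h3.mul_continuousOn hY1 hK).add (h4.mul_continuousOn hY2 hK))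

lemma integrableOn_MM {K : Set ℝ}
    (h1 : IntegrableOn a₁ K volume) (h2 : IntegrableOn a₂ K volume)
    (h3 : IntegrableOn a₃ K volume) (h4 : IntegrableOn a₄ K volume) :
    IntegrableOn (MM a₁ a₂ a₃ a₄) K volume :=
  ((h1.abs.add h2.abs).add h3.abs).add h4.abs

/-- `Y` solves the integral equation on `[c,d]` with initial data `(e, Y₀)`. -/
def SolOn (c d e : ℝ) (Y₀ : ℝ × ℝ) (Y : ℝ → ℝ × ℝ) : Prop :=
  ContinuousOn Y (Icc c d) ∧
    IntegrableOn (fun τ => NN a₁ a₂ a₃ a₄ τ (Y τ)) (Icc c d) volume ∧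
    ∀ t ∈ Icc c d, Y t = Y₀ + ∫ τ in e..t, NN a₁ a₂ a₃ a₄ τ (Y τ)

variable {a₁ a₂ a₃ a₄}
variable {c d e : ℝ}

lemma key_est (he : e ∈ Icc c d) {t : ℝ} (ht : t ∈ Icc c d)
    (h1 : IntegrableOn a₁ (Icc c d) volume) (h2 : IntegrableOn a₂ (Icc c d) volume)
    (h3 : IntegrableOn a₃ (Icc c d) volume) (h4 : IntegrableOn a₄ (Icc c d) volume)
    {Y Z : ℝ → ℝ × ℝ}
    (hY : IntegrableOn (fun τ => NN a₁ a₂ a₃ a₄ τ (Y τ)) (Icc c d) volume)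
    (hZ : IntegrableOn (fun τ => NN a₁ a₂ a₃ a₄ τ (Z τ)) (Icc c d) volume)
    {D : ℝ} (hD : 0 ≤ D) (hbd : ∀ τ ∈ Icc c d, ‖Y τ - Z τ‖ ≤ D) :
    ‖(∫ τ in e..t, NN a₁ a₂ a₃ a₄ τ (Y τ)) - ∫ τ in e..t, NN a₁ a₂ a₃ a₄ τ (Z τ)‖ ≤
      (∫ τ in Icc c d, MM a₁ a₂ a₃ a₄ τ) * D := by
  have hsub : uIcc e t ⊆ Icc c d := uIcc_subset_Icc he ht
  have hsub' : Ι e t ⊆ Icc c d := (uIoc_subset_uIcc).trans hsub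
  have hYi : IntervalIntegrable (fun τ => NN a₁ a₂ a₃ a₄ τ (Y τ)) volume e t :=
    (hY.mono_set hsub).intervalIntegrable
  have hZi : IntervalIntegrable (fun τ => NN a₁ a₂ a₃ a₄ τ (Z τ)) volume e t :=
    (hZ.mono_set hsub).intervalIntegrable
  rw [← integral_sub hYi hZi]
  refine le_trans (norm_integral_le_integral_norm_uIoc) ?_
  have hMi : IntegrableOn (MM a₁ a₂ a₃ a₄) (Icc c d) volume := integrableOn_MM _ _ _ _ h1 h2 h3 h4
  have step1 : ∫ τ in Ι e t, ‖NN a₁ a₂ a₃ a₄ τ (Y τ) - NN a₁ a₂ a₃ a₄ τ (Z τ)‖ ≤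
      ∫ τ in Ι e t, MM a₁ a₂ a₃ a₄ τ * D := by
    refine setIntegral_mono_on ?_ ?_ measurableSet_uIoc ?_
    · have := (((hY.mono_set hsub').sub (hZ.mono_set hsub'))).norm
      exact this
    · exact ((hMi.mono_set hsub').mul_const D)
    · intro τ hτ
      rw [NN_sub]
      exact le_trans (norm_NN_le _ _ _ _ τ _)
        (mul_le_mul_of_nonneg_left (hbd τ (hsub' hτ)) (MM_nonneg _ _ _ _ τ))
  refine step1.trans ?_
  have step2 : ∫ τ in Ι e t, MM a₁ a₂ a₃ a₄ τ * D ≤ ∫ τ in Icc c d, MM a₁ a₂ a₃ a₄ τ * D := by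
    refine setIntegral_mono_set (hMi.mul_const D) ?_ (Filter.Eventually.of_forall hsub')
    exact Filter.Eventually.of_forall fun τ => mul_nonneg (MM_nonneg _ _ _ _ τ) hD
  refine step2.trans ?_
  rw [MeasureTheory.integral_mul_const]

lemma EX_small (hcd : c ≤ d) (he : e ∈ Icc c d) (Y₀ : ℝ × ℝ)
    (h1 : IntegrableOn a₁ (Icc c d) volume) (h2 : IntegrableOn a₂ (Icc c d) volume)
    (h3 : IntegrableOn a₃ (Icc c d) volume) (h4 : IntegrableOn a₄ (Icc c d) volume)
    (hM : (∫ τ in Icc c d, MM a₁ a₂ a₃ a₄ τ) ≤ 1/2) :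
    ∃ Y, SolOn a₁ a₂ a₃ a₄ c d e Y₀ Y := by
  haveI : Nonempty C(↑(Icc c d), ℝ × ℝ) := ⟨ContinuousMap.const _ 0⟩
  have extCont : ∀ φ : C(↑(Icc c d), ℝ × ℝ), Continuous (IccExtend hcd φ) := fun φ =>
    φ.continuous.Icc_extend'
  have fInt : ∀ φ : C(↑(Icc c d), ℝ × ℝ),
      IntegrableOn (fun τ => NN a₁ a₂ a₃ a₄ τ (IccExtend hcd φ τ)) (Icc c d) volume := fun φ =>
    integrableOn_NN _ _ _ _ isCompact_Icc h1 h2 h3 h4 (extCont φ).continuousOn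
  have gCont : ∀ φ : C(↑(Icc c d), ℝ × ℝ),
      ContinuousOn (fun x => Y₀ + ∫ τ in e..x, NN a₁ a₂ a₃ a₄ τ (IccExtend hcd φ τ))
        (Icc c d) := by
    intro φ
    have hii : IntervalIntegrable (fun τ => NN a₁ a₂ a₃ a₄ τ (IccExtend hcd φ τ)) volume c d := by
      refine IntegrableOn.intervalIntegrable ?_
      rw [uIcc_of_le hcd]; exact fInt φ
    have := continuousOn_primitive_interval' hii (by rwa [uIcc_of_le hcd])
    rw [uIcc_of_le hcd] at this
    exact continuousOn_const.add this
  let T : C(↑(Icc c d), ℝ × ℝ) → C(↑(Icc c d), ℝ × ℝ) := fun φ =>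
    ⟨fun t => Y₀ + ∫ τ in e..(t : ℝ), NN a₁ a₂ a₃ a₄ τ (IccExtend hcd φ τ), (gCont φ).restrict⟩
  have hTlip : ∀ φ ψ, dist (T φ) (T ψ) ≤ (1/2 : ℝ) * dist φ ψ := by
    intro φ ψ
    refine (ContinuousMap.dist_le (by positivity)).mpr ?_
    intro t
    have hest : dist ((T φ) t) ((T ψ) t) ≤ (∫ τ in Icc c d, MM a₁ a₂ a₃ a₄ τ) * dist φ ψ := by
      rw [dist_eq_norm]
      have heq : (T φ) t - (T ψ) t =
          (∫ τ in e..(t : ℝ), NN a₁ a₂ a₃ a₄ τ (IccExtend hcd φ τ)) -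
          ∫ τ in e..(t : ℝ), NN a₁ a₂ a₃ a₄ τ (IccExtend hcd ψ τ) := by
        show (Y₀ + _) - (Y₀ + _) = _
        abel
      rw [heq]
      refine key_est he t.2 h1 h2 h3 h4 (fInt φ) (fInt ψ) dist_nonneg ?_
      intro τ hτ
      rw [IccExtend_of_mem hcd φ hτ, IccExtend_of_mem hcd ψ hτ, ← dist_eq_norm]
      exact ContinuousMap.dist_apply_le_dist _
    refine hest.trans (mul_le_mul_of_nonneg_right hM dist_nonneg)
  have hT : ContractingWith (1/2 : NNReal) T := by
    constructor
    · have h : ((1/2 : NNReal) : ℝ) < 1 := by norm_num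
      exact_mod_cast h
    · refine LipschitzWith.of_dist_le_mul ?_
      intro φ ψ
      refine le_trans (hTlip φ ψ) (le_of_eq ?_)
      norm_num
  let φ := hT.fixedPoint T
  have hfix : T φ = φ := hT.fixedPoint_isFixedPt
  refine ⟨IccExtend hcd φ, (extCont φ).continuousOn, fInt φ, ?_⟩
  intro t ht
  conv_lhs => rw [IccExtend_of_mem hcd φ ht, ← hfix]
  rfl

lemma UNIQ_small (he : e ∈ Icc c d) (Y₀ : ℝ × ℝ)
    (h1 : IntegrableOn a₁ (Icc c d) volume) (h2 : IntegrableOn a₂ (Icc c d) volume)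
    (h3 : IntegrableOn a₃ (Icc c d) volume) (h4 : IntegrableOn a₄ (Icc c d) volume)
    (hM : (∫ τ in Icc c d, MM a₁ a₂ a₃ a₄ τ) ≤ 1/2)
    {Y Z : ℝ → ℝ × ℝ} (hY : SolOn a₁ a₂ a₃ a₄ c d e Y₀ Y)
    (hZ : SolOn a₁ a₂ a₃ a₄ c d e Y₀ Z) : ∀ t ∈ Icc c d, Y t = Z t := by
  obtain ⟨hYc, hYi, hYe⟩ := hY
  obtain ⟨hZc, hZi, hZe⟩ := hZ
  have hDc : ContinuousOn (fun t => ‖Y t - Z t‖) (Icc c d) := (hYc.sub hZc).norm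
  obtain ⟨tm, htm, hmax⟩ := isCompact_Icc.exists_isMaxOn ⟨e, he⟩ hDc
  have hbd : ∀ τ ∈ Icc c d, ‖Y τ - Z τ‖ ≤ ‖Y tm - Z tm‖ := fun τ hτ => hmax hτ
  have hkey : ‖Y tm - Z tm‖ ≤ (∫ τ in Icc c d, MM a₁ a₂ a₃ a₄ τ) * ‖Y tm - Z tm‖ := by
    have heq : Y tm - Z tm =
        (∫ τ in e..tm, NN a₁ a₂ a₃ a₄ τ (Y τ)) - ∫ τ in e..tm, NN a₁ a₂ a₃ a₄ τ (Z τ) := by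
      rw [hYe tm htm, hZe tm htm]; abel
    calc ‖Y tm - Z tm‖ = _ := by rw [heq]
    _ ≤ _ := key_est he htm h1 h2 h3 h4 hYi hZi (norm_nonneg _) hbd
  have hzero : ‖Y tm - Z tm‖ ≤ 0 := by
    have := mul_le_mul_of_nonneg_right hM (norm_nonneg (Y tm - Z tm))
    linarith
  intro t ht
  have := (hbd t ht).trans hzero
  have : ‖Y t - Z t‖ = 0 := le_antisymm this (norm_nonneg _)
  rwa [norm_eq_zero, sub_eq_zero] at this

variable {c' d' : ℝ} {Y₀ : ℝ × ℝ} {Y Z : ℝ → ℝ × ℝ}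

lemma SolOn.mono (hY : SolOn a₁ a₂ a₃ a₄ c d e Y₀ Y) (hsub : Icc c' d' ⊆ Icc c d) :
    SolOn a₁ a₂ a₃ a₄ c' d' e Y₀ Y :=
  ⟨hY.1.mono hsub, hY.2.1.mono_set hsub, fun t ht => hY.2.2 t (hsub ht)⟩

lemma SolOn.intervalIntegrable (hY : SolOn a₁ a₂ a₃ a₄ c d e Y₀ Y) {x y : ℝ}
    (hx : x ∈ Icc c d) (hy : y ∈ Icc c d) :
    IntervalIntegrable (fun τ => NN a₁ a₂ a₃ a₄ τ (Y τ)) volume x y :=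
  (hY.2.1.mono_set (uIcc_subset_Icc hx hy)).intervalIntegrable

lemma SolOn.rebase (hY : SolOn a₁ a₂ a₃ a₄ c d e Y₀ Y) (he : e ∈ Icc c d) {e' : ℝ}
    (he' : e' ∈ Icc c d) : SolOn a₁ a₂ a₃ a₄ c d e' (Y e') Y := by
  refine ⟨hY.1, hY.2.1, fun t ht => ?_⟩
  rw [hY.2.2 t ht, hY.2.2 e' he', add_assoc]
  congr 1
  rw [intervalIntegral.integral_add_adjacent_intervals
    (hY.intervalIntegrable he he') (hY.intervalIntegrable he' ht)]

lemma continuousOn_glue_right (hcd' : c ≤ d') (hd : d' ≤ d)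
    (hYc : ContinuousOn Y (Icc c d')) (hZc : ContinuousOn Z (Icc d' d)) (hag : Y d' = Z d') :
    ContinuousOn (fun t => if t ≤ d' then Y t else Z t) (Icc c d) := by
  set W : ℝ → ℝ × ℝ := fun t => if t ≤ d' then Y t else Z t with hW
  have hEq1 : EqOn W Y (Icc c d') := fun t ht => by simp [hW, if_pos ht.2]
  have hEq2 : EqOn W Z (Icc d' d) := by
    intro t ht
    by_cases h : t ≤ d'
    · have : t = d' := le_antisymm h ht.1
      simp [hW, this, hag]
    · simp [hW, if_neg h]
  rw [← Icc_union_Icc_eq_Icc hcd' hd]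
  intro x hx
  have h1 : ContinuousWithinAt W (Icc c d') x := by
    by_cases hx1 : x ∈ Icc c d'
    · exact ((hYc x hx1).congr hEq1 (hEq1 hx1))
    · exact continuousWithinAt_of_notMem_closure (by rwa [isClosed_Icc.closure_eq])
  have h2 : ContinuousWithinAt W (Icc d' d) x := by
    by_cases hx2 : x ∈ Icc d' d
    · exact ((hZc x hx2).congr hEq2 (hEq2 hx2))
    · exact continuousWithinAt_of_notMem_closure (by rwa [isClosed_Icc.closure_eq])
  exact h1.union h2

lemma SolOn.glue_right (hcd' : c ≤ d') (hd : d' ≤ d) (he : e ∈ Icc c d')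
    (hY : SolOn a₁ a₂ a₃ a₄ c d' e Y₀ Y) (hZ : SolOn a₁ a₂ a₃ a₄ d' d d' (Y d') Z) :
    SolOn a₁ a₂ a₃ a₄ c d e Y₀ (fun t => if t ≤ d' then Y t else Z t) := by
  set W : ℝ → ℝ × ℝ := fun t => if t ≤ d' then Y t else Z t with hW
  have hag : Z d' = Y d' := by
    have := hZ.2.2 d' (left_mem_Icc.mpr hd)
    rwa [intervalIntegral.integral_same, add_zero] at this
  have hEq1 : EqOn W Y (Icc c d') := fun t ht => by simp [hW, if_pos ht.2]
  have hEq2 : EqOn W Z (Icc d' d) := by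
    intro t ht
    by_cases h : t ≤ d'
    · have : t = d' := le_antisymm h ht.1
      simp [hW, this, hag]
    · simp [hW, if_neg h]
  have hNN1 : EqOn (fun τ => NN a₁ a₂ a₃ a₄ τ (W τ)) (fun τ => NN a₁ a₂ a₃ a₄ τ (Y τ))
      (Icc c d') := fun τ hτ => by simp only [hEq1 hτ]
  have hNN2 : EqOn (fun τ => NN a₁ a₂ a₃ a₄ τ (W τ)) (fun τ => NN a₁ a₂ a₃ a₄ τ (Z τ))
      (Icc d' d) := fun τ hτ => by simp only [hEq2 hτ]
  have hInt : IntegrableOn (fun τ => NN a₁ a₂ a₃ a₄ τ (W τ)) (Icc c d) volume := by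
    rw [← Icc_union_Icc_eq_Icc hcd' hd]
    exact (hY.2.1.congr_fun hNN1.symm measurableSet_Icc).union
      (hZ.2.1.congr_fun hNN2.symm measurableSet_Icc)
  refine ⟨continuousOn_glue_right hcd' hd hY.1 hZ.1 hag.symm, hInt, ?_⟩
  intro t ht
  by_cases h : t ≤ d'
  · have ht' : t ∈ Icc c d' := ⟨ht.1, h⟩
    have : W t = Y t := hEq1 ht'
    rw [this, hY.2.2 t ht']
    congr 1
    exact (intervalIntegral.integral_congr (hNN1.mono (uIcc_subset_Icc he ht'))).symm
  · have ht2 : t ∈ Icc d' d := ⟨le_of_not_ge h, ht.2⟩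
    have hWt : W t = Z t := hEq2 ht2
    have hd'm : d' ∈ Icc c d' := right_mem_Icc.mpr hcd'
    have e1 : (∫ τ in e..d', NN a₁ a₂ a₃ a₄ τ (W τ)) = ∫ τ in e..d', NN a₁ a₂ a₃ a₄ τ (Y τ) :=
      intervalIntegral.integral_congr (hNN1.mono (uIcc_subset_Icc he hd'm))
    have e2 : (∫ τ in d'..t, NN a₁ a₂ a₃ a₄ τ (W τ)) = ∫ τ in d'..t, NN a₁ a₂ a₃ a₄ τ (Z τ) :=
      intervalIntegral.integral_congr (hNN2.mono (uIcc_subset_Icc (left_mem_Icc.mpr hd) ht2))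
    have i1 : IntervalIntegrable (fun τ => NN a₁ a₂ a₃ a₄ τ (W τ)) volume e d' :=
      (hInt.mono_set (uIcc_subset_Icc ⟨he.1, he.2.trans hd⟩ ⟨hcd', hd⟩)).intervalIntegrable
    have i2 : IntervalIntegrable (fun τ => NN a₁ a₂ a₃ a₄ τ (W τ)) volume d' t :=
      (hInt.mono_set (uIcc_subset_Icc ⟨hcd', hd⟩ ht)).intervalIntegrable
    rw [hWt, hZ.2.2 t ht2, hY.2.2 d' hd'm, ← e1, ← e2, add_assoc]
    congr 1
    exact intervalIntegral.integral_add_adjacent_intervals i1 i2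

lemma continuousOn_glue_left (hc : c ≤ c') (hc'd : c' ≤ d)
    (hYc : ContinuousOn Y (Icc c' d)) (hZc : ContinuousOn Z (Icc c c')) (hag : Y c' = Z c') :
    ContinuousOn (fun t => if c' ≤ t then Y t else Z t) (Icc c d) := by
  set W : ℝ → ℝ × ℝ := fun t => if c' ≤ t then Y t else Z t with hW
  have hEq1 : EqOn W Y (Icc c' d) := fun t ht => by simp [hW, if_pos ht.1]
  have hEq2 : EqOn W Z (Icc c c') := by
    intro t ht
    by_cases h : c' ≤ t
    · have : t = c' := le_antisymm ht.2 h
      simp [hW, this, hag]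
    · simp [hW, if_neg h]
  rw [← Icc_union_Icc_eq_Icc hc hc'd]
  intro x hx
  have h1 : ContinuousWithinAt W (Icc c' d) x := by
    by_cases hx1 : x ∈ Icc c' d
    · exact ((hYc x hx1).congr hEq1 (hEq1 hx1))
    · exact continuousWithinAt_of_notMem_closure (by rwa [isClosed_Icc.closure_eq])
  have h2 : ContinuousWithinAt W (Icc c c') x := by
    by_cases hx2 : x ∈ Icc c c'
    · exact ((hZc x hx2).congr hEq2 (hEq2 hx2))
    · exact continuousWithinAt_of_notMem_closure (by rwa [isClosed_Icc.closure_eq])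
  exact h2.union h1

lemma SolOn.glue_left (hc : c ≤ c') (hc'd : c' ≤ d) (he : e ∈ Icc c' d)
    (hY : SolOn a₁ a₂ a₃ a₄ c' d e Y₀ Y) (hZ : SolOn a₁ a₂ a₃ a₄ c c' c' (Y c') Z) :
    SolOn a₁ a₂ a₃ a₄ c d e Y₀ (fun t => if c' ≤ t then Y t else Z t) := by
  set W : ℝ → ℝ × ℝ := fun t => if c' ≤ t then Y t else Z t with hW
  have hag : Z c' = Y c' := by
    have := hZ.2.2 c' (right_mem_Icc.mpr hc)
    rwa [intervalIntegral.integral_same, add_zero] at this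
  have hEq1 : EqOn W Y (Icc c' d) := fun t ht => by simp [hW, if_pos ht.1]
  have hEq2 : EqOn W Z (Icc c c') := by
    intro t ht
    by_cases h : c' ≤ t
    · have : t = c' := le_antisymm ht.2 h
      simp [hW, this, hag]
    · simp [hW, if_neg h]
  have hNN1 : EqOn (fun τ => NN a₁ a₂ a₃ a₄ τ (W τ)) (fun τ => NN a₁ a₂ a₃ a₄ τ (Y τ))
      (Icc c' d) := fun τ hτ => by simp only [hEq1 hτ]
  have hNN2 : EqOn (fun τ => NN a₁ a₂ a₃ a₄ τ (W τ)) (fun τ => NN a₁ a₂ a₃ a₄ τ (Z τ))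
      (Icc c c') := fun τ hτ => by simp only [hEq2 hτ]
  have hInt : IntegrableOn (fun τ => NN a₁ a₂ a₃ a₄ τ (W τ)) (Icc c d) volume := by
    rw [← Icc_union_Icc_eq_Icc hc hc'd]
    exact (hZ.2.1.congr_fun hNN2.symm measurableSet_Icc).union
      (hY.2.1.congr_fun hNN1.symm measurableSet_Icc)
  refine ⟨continuousOn_glue_left hc hc'd hY.1 hZ.1 hag.symm, hInt, ?_⟩
  intro t ht
  by_cases h : c' ≤ t
  · have ht' : t ∈ Icc c' d := ⟨h, ht.2⟩
    have : W t = Y t := hEq1 ht'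
    rw [this, hY.2.2 t ht']
    congr 1
    exact (intervalIntegral.integral_congr (hNN1.mono (uIcc_subset_Icc he ht'))).symm
  · have ht2 : t ∈ Icc c c' := ⟨ht.1, le_of_not_ge h⟩
    have hWt : W t = Z t := hEq2 ht2
    have hc'm : c' ∈ Icc c' d := left_mem_Icc.mpr hc'd
    have e1 : (∫ τ in e..c', NN a₁ a₂ a₃ a₄ τ (W τ)) = ∫ τ in e..c', NN a₁ a₂ a₃ a₄ τ (Y τ) :=
      intervalIntegral.integral_congr (hNN1.mono (uIcc_subset_Icc he hc'm))
    have e2 : (∫ τ in c'..t, NN a₁ a₂ a₃ a₄ τ (W τ)) = ∫ τ in c'..t, NN a₁ a₂ a₃ a₄ τ (Z τ) :=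
      intervalIntegral.integral_congr (hNN2.mono (uIcc_subset_Icc (right_mem_Icc.mpr hc) ht2))
    have i1 : IntervalIntegrable (fun τ => NN a₁ a₂ a₃ a₄ τ (W τ)) volume e c' :=
      (hInt.mono_set (uIcc_subset_Icc ⟨hc.trans he.1, he.2⟩ ⟨hc, hc'd⟩)).intervalIntegrable
    have i2 : IntervalIntegrable (fun τ => NN a₁ a₂ a₃ a₄ τ (W τ)) volume c' t :=
      (hInt.mono_set (uIcc_subset_Icc ⟨hc, hc'd⟩ ht)).intervalIntegrable
    rw [hWt, hZ.2.2 t ht2, hY.2.2 c' hc'm, ← e1, ← e2, add_assoc]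
    congr 1
    exact intervalIntegral.integral_add_adjacent_intervals i1 i2

lemma min_lip (c a b : ℝ) : |min c a - min c b| ≤ |a - b| := by
  have h1 := le_abs_self (a - b)
  have h2 := neg_abs_le (a - b)
  rcases le_total c a with h3 | h3 <;> rcases le_total c b with h4 | h4 <;>
    rw [abs_le] <;> constructor <;>
    simp [min_eq_left, min_eq_right, h3, h4] <;> linarith

lemma max_lip (c a b : ℝ) : |max c a - max c b| ≤ |a - b| := by
  have h1 := le_abs_self (a - b)
  have h2 := neg_abs_le (a - b)
  rcases le_total c a with h3 | h3 <;> rcases le_total c b with h4 | h4 <;>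
    rw [abs_le] <;> constructor <;>
    simp [max_eq_left, max_eq_right, h3, h4] <;> linarith

lemma exists_delta (hcd : c ≤ d)
    (h1 : IntegrableOn a₁ (Icc c d) volume) (h2 : IntegrableOn a₂ (Icc c d) volume)
    (h3 : IntegrableOn a₃ (Icc c d) volume) (h4 : IntegrableOn a₄ (Icc c d) volume) :
    ∃ δ > 0, ∀ x y : ℝ, c ≤ x → x ≤ y → y ≤ d → y - x ≤ δ →
      (∫ τ in Icc x y, MM a₁ a₂ a₃ a₄ τ) ≤ 1/2 := by
  have hMi : IntegrableOn (MM a₁ a₂ a₃ a₄) (Icc c d) volume := integrableOn_MM _ _ _ _ h1 h2 h3 h4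
  have hii : IntervalIntegrable (MM a₁ a₂ a₃ a₄) volume c d := by
    refine IntegrableOn.intervalIntegrable ?_; rwa [uIcc_of_le hcd]
  set F : ℝ → ℝ := fun x => ∫ τ in c..x, MM a₁ a₂ a₃ a₄ τ with hF
  have Fc : ContinuousOn F (Icc c d) := by
    have := continuousOn_primitive_interval' hii (left_mem_uIcc)
    rwa [uIcc_of_le hcd] at this
  have UC := isCompact_Icc.uniformContinuousOn_of_continuous Fc
  rw [Metric.uniformContinuousOn_iff_le] at UC
  obtain ⟨δ, hδ, hUC⟩ := UC (1/2) (by norm_num)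
  refine ⟨δ, hδ, ?_⟩
  intro x y hx hxy hyd hsmall
  have hxm : x ∈ Icc c d := ⟨hx, hxy.trans hyd⟩
  have hym : y ∈ Icc c d := ⟨hx.trans hxy, hyd⟩
  have hdist : dist y x ≤ δ := by
    rw [Real.dist_eq, abs_of_nonneg (by linarith)]
    linarith
  have hFd := hUC y hym x hxm hdist
  have iix : IntervalIntegrable (MM a₁ a₂ a₃ a₄) volume c x :=
    (hMi.mono_set (uIcc_subset_Icc (left_mem_Icc.mpr hcd) hxm)).intervalIntegrable
  have iiy : IntervalIntegrable (MM a₁ a₂ a₃ a₄) volume c y :=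
    (hMi.mono_set (uIcc_subset_Icc (left_mem_Icc.mpr hcd) hym)).intervalIntegrable
  have key : (∫ τ in Icc x y, MM a₁ a₂ a₃ a₄ τ) = F y - F x := by
    rw [MeasureTheory.integral_Icc_eq_integral_Ioc, ← intervalIntegral.integral_of_le hxy]
    exact (intervalIntegral.integral_interval_sub_left iiy iix).symm
  rw [key]
  calc F y - F x ≤ |F y - F x| := le_abs_self _
  _ = dist (F y) (F x) := (Real.dist_eq _ _).symm
  _ ≤ 1/2 := hFd

lemma EX_all (hcd : c ≤ d) (he : e ∈ Icc c d)
    (h1 : IntegrableOn a₁ (Icc c d) volume) (h2 : IntegrableOn a₂ (Icc c d) volume)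
    (h3 : IntegrableOn a₃ (Icc c d) volume) (h4 : IntegrableOn a₄ (Icc c d) volume)
    (Y₀ : ℝ × ℝ) : ∃ Y, SolOn a₁ a₂ a₃ a₄ c d e Y₀ Y := by
  obtain ⟨δ, hδ, hsmall⟩ := exists_delta hcd h1 h2 h3 h4
  set cc : ℕ → ℝ := fun n => max c (e - n * δ) with hcc
  set dd : ℕ → ℝ := fun n => min d (e + n * δ) with hdd
  have hnn : ∀ n : ℕ, (0:ℝ) ≤ n * δ := fun n => mul_nonneg (Nat.cast_nonneg n) hδ.le
  have hccm : ∀ n, cc n ∈ Icc c d :=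
    fun n => ⟨le_max_left _ _, max_le hcd (by have := hnn n; have := he.2; simp [hcc]; linarith)⟩
  have hddm : ∀ n, dd n ∈ Icc c d :=
    fun n => ⟨le_min hcd (by have := hnn n; have := he.1; simp [hdd]; linarith), min_le_left _ _⟩
  have hcce : ∀ n, cc n ≤ e := fun n => max_le he.1 (by have := hnn n; linarith)
  have hedd : ∀ n, e ≤ dd n := fun n => le_min he.2 (by have := hnn n; linarith)
  have hccdd : ∀ n, cc n ≤ dd n := fun n => (hcce n).trans (hedd n)
  have hccmono : ∀ n, cc (n+1) ≤ cc n := by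
    intro n
    refine max_le_max le_rfl ?_
    have : (0:ℝ) ≤ δ := hδ.le
    push_cast
    linarith
  have hddmono : ∀ n, dd n ≤ dd (n+1) := by
    intro n
    refine min_le_min le_rfl ?_
    have : (0:ℝ) ≤ δ := hδ.le
    push_cast
    linarith
  have hccstep : ∀ n, cc n - cc (n+1) ≤ δ := by
    intro n
    have h4 : |cc n - cc (n+1)| ≤ δ := by
      simp only [hcc]
      refine (max_lip _ _ _).trans_eq ?_
      push_cast
      rw [show (e - (n:ℝ) * δ) - (e - ((n:ℝ)+1) * δ) = δ by ring]
      exact abs_of_pos hδ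
    exact (le_abs_self _).trans h4
  have hddstep : ∀ n, dd (n+1) - dd n ≤ δ := by
    intro n
    have h4 : |dd (n+1) - dd n| ≤ δ := by
      simp only [hdd]
      refine (min_lip _ _ _).trans_eq ?_
      push_cast
      rw [show (e + ((n:ℝ)+1) * δ) - (e + (n:ℝ) * δ) = δ by ring]
      exact abs_of_pos hδ
    exact (le_abs_self _).trans h4
  have Q : ∀ n : ℕ, ∀ W₀ : ℝ × ℝ, ∃ Y, SolOn a₁ a₂ a₃ a₄ (cc n) (dd n) e W₀ Y := by
    intro n
    induction n with
    | zero =>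
      intro W₀
      have hc0 : cc 0 = e := by simp [hcc, max_eq_right he.1]
      have hd0 : dd 0 = e := by simp [hdd, min_eq_right he.2]
      refine ⟨fun _ => W₀, ?_⟩
      rw [hc0, hd0]
      refine ⟨continuousOn_const, ?_, ?_⟩
      · have h0 : (volume : Measure ℝ).restrict (Icc e e) = 0 := by
          rw [Measure.restrict_eq_zero, Icc_self]
          exact measure_singleton e
        rw [IntegrableOn, h0]
        exact integrable_zero_measure
      · intro t ht
        rw [Icc_self, mem_singleton_iff] at ht
        subst ht
        rw [intervalIntegral.integral_same, add_zero]
    | succ n ih =>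
      intro W₀
      obtain ⟨Y, hY⟩ := ih W₀
      have hsub1 : Icc (dd n) (dd (n+1)) ⊆ Icc c d :=
        Icc_subset_Icc (hddm n).1 (hddm (n+1)).2
      obtain ⟨Z, hZ⟩ := EX_small (hddmono n) (left_mem_Icc.mpr (hddmono n)) (Y (dd n))
        (h1.mono_set hsub1) (h2.mono_set hsub1) (h3.mono_set hsub1) (h4.mono_set hsub1)
        (hsmall (dd n) (dd (n+1)) (hddm n).1 (hddmono n) (hddm (n+1)).2 (hddstep n))
      have hW := hY.glue_right (hccdd n) (hddmono n) ⟨hcce n, hedd n⟩ hZ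
      have hsub2 : Icc (cc (n+1)) (cc n) ⊆ Icc c d :=
        Icc_subset_Icc (hccm (n+1)).1 (hccm n).2
      obtain ⟨V, hV⟩ := EX_small (hccmono n) (right_mem_Icc.mpr (hccmono n))
        ((fun t => if t ≤ dd n then Y t else Z t) (cc n))
        (h1.mono_set hsub2) (h2.mono_set hsub2) (h3.mono_set hsub2) (h4.mono_set hsub2)
        (hsmall (cc (n+1)) (cc n) (hccm (n+1)).1 (hccmono n) (hccm n).2 (hccstep n))
      exact ⟨_, hW.glue_left (hccmono n) ((hccdd n).trans (hddmono n))
        ⟨hcce n, (hedd n).trans (hddmono n)⟩ hV⟩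
  obtain ⟨n, hn⟩ := exists_nat_ge (max ((e - c)/δ) ((d - e)/δ))
  have h1n : (e - c)/δ ≤ n := (le_max_left _ _).trans hn
  have h2n : (d - e)/δ ≤ n := (le_max_right _ _).trans hn
  have hccn : cc n = c := by
    rw [hcc]
    refine max_eq_left ?_
    rw [div_le_iff₀ hδ] at h1n
    linarith
  have hddn : dd n = d := by
    rw [hdd]
    refine min_eq_left ?_
    rw [div_le_iff₀ hδ] at h2n
    linarith
  obtain ⟨Y, hY⟩ := Q n Y₀
  rw [hccn, hddn] at hY
  exact ⟨Y, hY⟩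

lemma UNIQ_all (hcd : c ≤ d) (he : e ∈ Icc c d)
    (h1 : IntegrableOn a₁ (Icc c d) volume) (h2 : IntegrableOn a₂ (Icc c d) volume)
    (h3 : IntegrableOn a₃ (Icc c d) volume) (h4 : IntegrableOn a₄ (Icc c d) volume)
    {Y Z : ℝ → ℝ × ℝ} (hY : SolOn a₁ a₂ a₃ a₄ c d e Y₀ Y)
    (hZ : SolOn a₁ a₂ a₃ a₄ c d e Y₀ Z) : ∀ t ∈ Icc c d, Y t = Z t := by
  obtain ⟨δ, hδ, hsmall⟩ := exists_delta hcd h1 h2 h3 h4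
  set cc : ℕ → ℝ := fun n => max c (e - n * δ) with hcc
  set dd : ℕ → ℝ := fun n => min d (e + n * δ) with hdd
  have hnn : ∀ n : ℕ, (0:ℝ) ≤ n * δ := fun n => mul_nonneg (Nat.cast_nonneg n) hδ.le
  have hccm : ∀ n, cc n ∈ Icc c d :=
    fun n => ⟨le_max_left _ _, max_le hcd (by have := hnn n; have := he.2; simp [hcc]; linarith)⟩
  have hddm : ∀ n, dd n ∈ Icc c d :=
    fun n => ⟨le_min hcd (by have := hnn n; have := he.1; simp [hdd]; linarith), min_le_left _ _⟩
  have hcce : ∀ n, cc n ≤ e := fun n => max_le he.1 (by have := hnn n; linarith)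
  have hedd : ∀ n, e ≤ dd n := fun n => le_min he.2 (by have := hnn n; linarith)
  have hccdd : ∀ n, cc n ≤ dd n := fun n => (hcce n).trans (hedd n)
  have hccmono : ∀ n, cc (n+1) ≤ cc n := by
    intro n
    refine max_le_max le_rfl ?_
    have : (0:ℝ) ≤ δ := hδ.le
    push_cast
    linarith
  have hddmono : ∀ n, dd n ≤ dd (n+1) := by
    intro n
    refine min_le_min le_rfl ?_
    have : (0:ℝ) ≤ δ := hδ.le
    push_cast
    linarith
  have hccstep : ∀ n, cc n - cc (n+1) ≤ δ := by
    intro n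
    have h4 : |cc n - cc (n+1)| ≤ δ := by
      simp only [hcc]
      refine (max_lip _ _ _).trans_eq ?_
      push_cast
      rw [show (e - (n:ℝ) * δ) - (e - ((n:ℝ)+1) * δ) = δ by ring]
      exact abs_of_pos hδ
    exact (le_abs_self _).trans h4
  have hddstep : ∀ n, dd (n+1) - dd n ≤ δ := by
    intro n
    have h4 : |dd (n+1) - dd n| ≤ δ := by
      simp only [hdd]
      refine (min_lip _ _ _).trans_eq ?_
      push_cast
      rw [show (e + ((n:ℝ)+1) * δ) - (e + (n:ℝ) * δ) = δ by ring]
      exact abs_of_pos hδ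
    exact (le_abs_self _).trans h4
  have Q : ∀ n : ℕ, ∀ t ∈ Icc (cc n) (dd n), Y t = Z t := by
    intro n
    induction n with
    | zero =>
      intro t ht
      have hc0 : cc 0 = e := by simp [hcc, max_eq_right he.1]
      have hd0 : dd 0 = e := by simp [hdd, min_eq_right he.2]
      rw [hc0, hd0, Icc_self, mem_singleton_iff] at ht
      rw [ht]
      have hYe := hY.2.2 e he
      have hZe := hZ.2.2 e he
      rw [intervalIntegral.integral_same, add_zero] at hYe hZe
      rw [hYe, hZe]
    | succ n ih =>
      intro t ht
      rcases le_total t (dd n) with htd | htd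
      · rcases le_total (cc n) t with htc | htc
        · exact ih t ⟨htc, htd⟩
        · -- t ∈ [cc (n+1), cc n]
          have hsub2 : Icc (cc (n+1)) (cc n) ⊆ Icc c d :=
            Icc_subset_Icc (hccm (n+1)).1 (hccm n).2
          have hccn_mem : cc n ∈ Icc c d := hccm n
          have hYr : SolOn a₁ a₂ a₃ a₄ (cc (n+1)) (cc n) (cc n) (Y (cc n)) Y :=
            (hY.rebase he hccn_mem).mono hsub2
          have hZr : SolOn a₁ a₂ a₃ a₄ (cc (n+1)) (cc n) (cc n) (Y (cc n)) Z := by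
            have : Z (cc n) = Y (cc n) :=
              (ih (cc n) ⟨le_rfl, hccdd n⟩).symm
            rw [← this] at *
            exact (hZ.rebase he hccn_mem).mono hsub2
          exact UNIQ_small (right_mem_Icc.mpr (hccmono n)) (Y (cc n))
            (h1.mono_set hsub2) (h2.mono_set hsub2) (h3.mono_set hsub2) (h4.mono_set hsub2)
            (hsmall (cc (n+1)) (cc n) (hccm (n+1)).1 (hccmono n) (hccm n).2 (hccstep n))
            hYr hZr t ⟨ht.1, htc⟩
      · -- t ∈ [dd n, dd (n+1)]
        have hsub1 : Icc (dd n) (dd (n+1)) ⊆ Icc c d :=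
          Icc_subset_Icc (hddm n).1 (hddm (n+1)).2
        have hddn_mem : dd n ∈ Icc c d := hddm n
        have hYr : SolOn a₁ a₂ a₃ a₄ (dd n) (dd (n+1)) (dd n) (Y (dd n)) Y :=
          (hY.rebase he hddn_mem).mono hsub1
        have hZr : SolOn a₁ a₂ a₃ a₄ (dd n) (dd (n+1)) (dd n) (Y (dd n)) Z := by
          have hzy : Z (dd n) = Y (dd n) := (ih (dd n) ⟨hccdd n, le_rfl⟩).symm
          have := (hZ.rebase he hddn_mem).mono hsub1
          rwa [hzy] at this
        exact UNIQ_small (left_mem_Icc.mpr (hddmono n)) (Y (dd n))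
          (h1.mono_set hsub1) (h2.mono_set hsub1) (h3.mono_set hsub1) (h4.mono_set hsub1)
          (hsmall (dd n) (dd (n+1)) (hddm n).1 (hddmono n) (hddm (n+1)).2 (hddstep n))
          hYr hZr t ⟨htd, ht.2⟩
  intro t ht
  obtain ⟨n, hn⟩ := exists_nat_ge (max ((e - c)/δ) ((d - e)/δ))
  have h1n : (e - c)/δ ≤ n := (le_max_left _ _).trans hn
  have h2n : (d - e)/δ ≤ n := (le_max_right _ _).trans hn
  have hccn : cc n = c := by
    rw [hcc]
    refine max_eq_left ?_
    rw [div_le_iff₀ hδ] at h1n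
    linarith
  have hddn : dd n = d := by
    rw [hdd]
    refine min_eq_left ?_
    rw [div_le_iff₀ hδ] at h2n
    linarith
  exact Q n t (by rw [hccn, hddn]; exact ht)

lemma GLOB {I : Set ℝ} (hI : I.OrdConnected) {x₀ : ℝ} (hx₀ : x₀ ∈ I)
    (L1 : LocallyIntegrableOn a₁ I volume) (L2 : LocallyIntegrableOn a₂ I volume)
    (L3 : LocallyIntegrableOn a₃ I volume) (L4 : LocallyIntegrableOn a₄ I volume)
    (Y₀ : ℝ × ℝ) :
    ∃ Y : ℝ → ℝ × ℝ, Y x₀ = Y₀ ∧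
      (∀ c d : ℝ, c ∈ I → d ∈ I → ContinuousOn Y (Icc c d) ∧
        IntegrableOn (fun τ => NN a₁ a₂ a₃ a₄ τ (Y τ)) (Icc c d) volume) ∧
      (∀ x ∈ I, ∀ y ∈ I, IntervalIntegrable (fun τ => NN a₁ a₂ a₃ a₄ τ (Y τ)) volume x y ∧
        Y y - Y x = ∫ τ in x..y, NN a₁ a₂ a₃ a₄ τ (Y τ)) := by
  have intOn : ∀ c d : ℝ, c ∈ I → d ∈ I →
      (IntegrableOn a₁ (Icc c d) volume ∧ IntegrableOn a₂ (Icc c d) volume) ∧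
      IntegrableOn a₃ (Icc c d) volume ∧ IntegrableOn a₄ (Icc c d) volume := by
    intro c d hc hd
    have hsub : Icc c d ⊆ I := hI.out hc hd
    exact ⟨⟨L1.integrableOn_compact_subset hsub isCompact_Icc,
      L2.integrableOn_compact_subset hsub isCompact_Icc⟩,
      L3.integrableOn_compact_subset hsub isCompact_Icc,
      L4.integrableOn_compact_subset hsub isCompact_Icc⟩
  have hmemmin : ∀ t ∈ I, min x₀ t ∈ I := by
    intro t ht; rcases min_choice x₀ t with h | h <;> rw [h] <;> assumption
  have hmemmax : ∀ t ∈ I, max x₀ t ∈ I := by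
    intro t ht; rcases max_choice x₀ t with h | h <;> rw [h] <;> assumption
  have sol : ∀ t, t ∈ I → ∃ Z, SolOn a₁ a₂ a₃ a₄ (min x₀ t) (max x₀ t) x₀ Y₀ Z := by
    intro t ht
    obtain ⟨⟨i1, i2⟩, i3, i4⟩ := intOn _ _ (hmemmin t ht) (hmemmax t ht)
    exact EX_all (min_le_max) ⟨min_le_left _ _, le_max_left _ _⟩ i1 i2 i3 i4 Y₀
  classical
  set Y : ℝ → ℝ × ℝ := fun t => if ht : t ∈ I then (sol t ht).choose t else 0 with hYdef
  have agree : ∀ c d : ℝ, c ∈ I → d ∈ I → x₀ ∈ Icc c d → ∀ Z,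
      SolOn a₁ a₂ a₃ a₄ c d x₀ Y₀ Z → ∀ t ∈ Icc c d, Y t = Z t := by
    intro c d hc hd hx₀m Z hZ t htm
    have htI : t ∈ I := hI.out hc hd htm
    rw [hYdef]
    simp only [dif_pos htI]
    have hsub : Icc (min x₀ t) (max x₀ t) ⊆ Icc c d :=
      Icc_subset_Icc (le_min hx₀m.1 htm.1) (max_le hx₀m.2 htm.2)
    obtain ⟨⟨i1, i2⟩, i3, i4⟩ := intOn _ _ (hmemmin t htI) (hmemmax t htI)
    exact UNIQ_all min_le_max ⟨min_le_left _ _, le_max_left _ _⟩ i1 i2 i3 i4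
      (sol t htI).choose_spec (hZ.mono hsub) t ⟨min_le_right _ _, le_max_right _ _⟩
  have hYx₀ : Y x₀ = Y₀ := by
    rw [hYdef]
    simp only [dif_pos hx₀]
    have h := (sol x₀ hx₀).choose_spec.2.2 x₀ ⟨min_le_left _ _, le_max_left _ _⟩
    rwa [intervalIntegral.integral_same, add_zero] at h
  have main : ∀ c d : ℝ, c ∈ I → d ∈ I → ContinuousOn Y (Icc c d) ∧
      IntegrableOn (fun τ => NN a₁ a₂ a₃ a₄ τ (Y τ)) (Icc c d) volume := by
    intro c d hc hd
    set C := min x₀ (min c d) with hC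
    set D := max x₀ (max c d) with hD
    have hCI : C ∈ I := by
      rcases min_choice x₀ (min c d) with h | h <;> rw [hC, h]
      · exact hx₀
      · rcases min_choice c d with h' | h' <;> rw [h'] <;> assumption
    have hDI : D ∈ I := by
      rcases max_choice x₀ (max c d) with h | h <;> rw [hD, h]
      · exact hx₀
      · rcases max_choice c d with h' | h' <;> rw [h'] <;> assumption
    have hCD : C ≤ D := (min_le_left _ _).trans (le_max_left _ _)
    have hx₀m : x₀ ∈ Icc C D := ⟨min_le_left _ _, le_max_left _ _⟩
    obtain ⟨⟨i1, i2⟩, i3, i4⟩ := intOn _ _ hCI hDI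
    obtain ⟨Z, hZ⟩ := EX_all hCD hx₀m i1 i2 i3 i4 Y₀
    have hagree : EqOn Y Z (Icc C D) := fun t ht => agree C D hCI hDI hx₀m Z hZ t ht
    have hsub : Icc c d ⊆ Icc C D :=
      Icc_subset_Icc ((min_le_right x₀ (min c d)).trans (min_le_left c d))
        ((le_max_right c d).trans (le_max_right x₀ (max c d)))
    constructor
    · exact (hZ.1.mono hsub).congr (hagree.mono hsub)
    · exact (hZ.2.1.mono_set hsub).congr_fun
        (fun τ hτ => by rw [hagree (hsub hτ)]) measurableSet_Icc
  refine ⟨Y, hYx₀, main, ?_⟩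
  intro x hx y hy
  set C := min x₀ (min x y) with hC
  set D := max x₀ (max x y) with hD
  have hCI : C ∈ I := by
    rcases min_choice x₀ (min x y) with h | h <;> rw [hC, h]
    · exact hx₀
    · rcases min_choice x y with h' | h' <;> rw [h'] <;> assumption
  have hDI : D ∈ I := by
    rcases max_choice x₀ (max x y) with h | h <;> rw [hD, h]
    · exact hx₀
    · rcases max_choice x y with h' | h' <;> rw [h'] <;> assumption
  have hCD : C ≤ D := (min_le_left _ _).trans (le_max_left _ _)
  have hx₀m : x₀ ∈ Icc C D := ⟨min_le_left _ _, le_max_left _ _⟩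
  have hxm : x ∈ Icc C D :=
    ⟨(min_le_right x₀ (min x y)).trans (min_le_left x y),
     (le_max_left x y).trans (le_max_right x₀ (max x y))⟩
  have hym : y ∈ Icc C D :=
    ⟨(min_le_right x₀ (min x y)).trans (min_le_right x y),
     (le_max_right x y).trans (le_max_right x₀ (max x y))⟩
  obtain ⟨⟨i1, i2⟩, i3, i4⟩ := intOn _ _ hCI hDI
  obtain ⟨Z, hZ⟩ := EX_all hCD hx₀m i1 i2 i3 i4 Y₀
  have hagree : EqOn Y Z (Icc C D) := fun t ht => agree C D hCI hDI hx₀m Z hZ t ht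
  have hNNagree : EqOn (fun τ => NN a₁ a₂ a₃ a₄ τ (Y τ)) (fun τ => NN a₁ a₂ a₃ a₄ τ (Z τ))
      (Icc C D) := fun τ hτ => by simp only [hagree hτ]
  have hIntY : IntegrableOn (fun τ => NN a₁ a₂ a₃ a₄ τ (Y τ)) (Icc C D) volume :=
    hZ.2.1.congr_fun (fun τ hτ => (hNNagree hτ).symm) measurableSet_Icc
  constructor
  · exact (hIntY.mono_set (uIcc_subset_Icc hxm hym)).intervalIntegrable
  · have hYx : Y x = Z x := hagree hxm
    have hYy : Y y = Z y := hagree hym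
    have iix : IntervalIntegrable (fun τ => NN a₁ a₂ a₃ a₄ τ (Z τ)) volume x₀ x :=
      hZ.intervalIntegrable hx₀m hxm
    have iiy : IntervalIntegrable (fun τ => NN a₁ a₂ a₃ a₄ τ (Z τ)) volume x₀ y :=
      hZ.intervalIntegrable hx₀m hym
    rw [hYx, hYy, hZ.2.2 x hxm, hZ.2.2 y hym]
    have : (Y₀ + ∫ τ in x₀..y, NN a₁ a₂ a₃ a₄ τ (Z τ)) -
        (Y₀ + ∫ τ in x₀..x, NN a₁ a₂ a₃ a₄ τ (Z τ)) =
        (∫ τ in x₀..y, NN a₁ a₂ a₃ a₄ τ (Z τ)) - ∫ τ in x₀..x, NN a₁ a₂ a₃ a₄ τ (Z τ) := by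
      abel
    rw [this, intervalIntegral.integral_interval_sub_left iiy iix]
    exact (intervalIntegral.integral_congr (hNNagree.mono (uIcc_subset_Icc hxm hym))).symm

end SLE
end SLEdev

noncomputable section SLEapp
open MeasureTheory Set intervalIntegral

lemma SLE.NN_def (a₁ a₂ a₃ a₄ : ℝ → ℝ) (t : ℝ) (Y : ℝ × ℝ) :
    SLE.NN a₁ a₂ a₃ a₄ t Y = (a₁ t * Y.1 + a₂ t * Y.2, a₃ t * Y.1 + a₄ t * Y.2) := rfl

lemma EI_ordConnected (a b : EReal) : (EI a b).OrdConnected := by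
  constructor
  intro x hx y hy z hz
  exact ⟨lt_of_lt_of_le hx.1 (EReal.coe_le_coe_iff.2 hz.1),
    lt_of_le_of_lt (EReal.coe_le_coe_iff.2 hz.2) hy.2⟩

lemma exists_right_real {x : ℝ} {b : EReal} (h : (x : EReal) < b) :
    ∃ t : ℝ, x < t ∧ (t : EReal) < b := by
  induction b with
  | bot => exact absurd h (by simp)
  | coe β =>
    have hxβ : x < β := EReal.coe_lt_coe_iff.1 h
    exact ⟨(x + β)/2, by linarith, by rw [EReal.coe_lt_coe_iff]; linarith⟩
  | top => exact ⟨x + 1, by linarith, by exact EReal.coe_lt_top _⟩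

lemma locIntOn_const_mul {f : ℝ → ℝ} {s : Set ℝ}
    (hf : LocallyIntegrableOn f s volume) (c : ℝ) :
    LocallyIntegrableOn (fun t => c * f t) s volume := by
  intro x hx
  rcases hf x hx with ⟨t, tmem, ht⟩
  exact ⟨t, tmem, ht.const_mul c⟩

/-- existence of a partner solution vanishing (with quasi-derivative 1) at `x₀`. -/
lemma exists_partner {a b : EReal} {p q r s : ℝ → ℝ} (H : SLH a b p q r s) (lam : ℝ)
    {x₀ : ℝ} (hx₀ : x₀ ∈ EI a b) :
    ∃ v : ℝ → ℝ, IsSolution (EI a b) p q r s lam v ∧ v x₀ = 0 ∧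
      (∀ c₂ : ℝ, (∀ t ∈ EI a b, c₂ * v t = 0) → c₂ = 0) := by
  classical
  set I := EI a b with hIdef
  have hI : I.OrdConnected := EI_ordConnected a b
  set A1 : ℝ → ℝ := fun t => -(s t) with hA1
  set A2 : ℝ → ℝ := fun t => 1 / p t with hA2
  set A3 : ℝ → ℝ := fun t => q t - lam * r t with hA3
  set A4 : ℝ → ℝ := s with hA4
  have L1 : LocallyIntegrableOn A1 I volume := by
    have := H.s_loc.neg
    exact this
  have L2 : LocallyIntegrableOn A2 I volume := H.invp_loc
  have L3 : LocallyIntegrableOn A3 I volume := by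
    have := H.q_loc.sub (locIntOn_const_mul H.r_loc lam)
    exact this
  have L4 : LocallyIntegrableOn A4 I volume := H.s_loc
  obtain ⟨Y, hYx₀, hcont, hmain⟩ := SLE.GLOB hI hx₀ L1 L2 L3 L4 ((0 : ℝ), (1 : ℝ))
  set f : ℝ → ℝ := fun t => (Y t).1 with hf
  set g : ℝ → ℝ := fun t => (Y t).2 with hg
  set vd : ℝ → ℝ := fun t => (SLE.NN A1 A2 A3 A4 t (Y t)).1 with hvd
  set v1d : ℝ → ℝ := fun t => (SLE.NN A1 A2 A3 A4 t (Y t)).2 with hv1d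
  have hvd_eq : ∀ t, vd t = -(s t) * f t + (1 / p t) * g t := by
    intro t; simp only [hvd, SLE.NN_def, hA1, hA2, hf, hg, hA4]
  have hv1d_eq : ∀ t, v1d t = (q t - lam * r t) * f t + s t * g t := by
    intro t; simp only [hv1d, SLE.NN_def, hA3, hA4, hf, hg]
  -- FTC components
  have hFTC : ∀ x ∈ I, ∀ y ∈ I,
      (IntervalIntegrable vd volume x y ∧ f y - f x = ∫ τ in x..y, vd τ) ∧
      (IntervalIntegrable v1d volume x y ∧ g y - g x = ∫ τ in x..y, v1d τ) := by
    intro x hx y hy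
    obtain ⟨ii, ee⟩ := hmain x hx y hy
    have ii1 : IntervalIntegrable vd volume x y := ⟨ii.1.fst, ii.2.fst⟩
    have ii2 : IntervalIntegrable v1d volume x y := ⟨ii.1.snd, ii.2.snd⟩
    have hfst := congrArg Prod.fst ee
    have hsnd := congrArg Prod.snd ee
    have c1 : ((∫ τ in x..y, SLE.NN A1 A2 A3 A4 τ (Y τ)) : ℝ × ℝ).1 = ∫ τ in x..y, vd τ := by
      exact ((ContinuousLinearMap.fst ℝ ℝ ℝ).intervalIntegral_comp_comm ii).symm
    have c2 : ((∫ τ in x..y, SLE.NN A1 A2 A3 A4 τ (Y τ)) : ℝ × ℝ).2 = ∫ τ in x..y, v1d τ := by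
      exact ((ContinuousLinearMap.snd ℝ ℝ ℝ).intervalIntegral_comp_comm ii).symm
    exact ⟨⟨ii1, by rw [← c1]; exact hfst⟩, ⟨ii2, by rw [← c2]; exact hsnd⟩⟩
  have had1 : HasAEDerivOn I f vd := fun x hx y hy => (hFTC x hx y hy).1
  have had2 : HasAEDerivOn I g v1d := fun x hx y hy => (hFTC x hx y hy).2
  have hae1 : ∀ᵐ t ∂(volume : Measure ℝ), t ∈ I → g t = p t * (vd t + s t * f t) := by
    filter_upwards [H.ppos] with t hp ht
    have hpt : p t ≠ 0 := (hp ht).ne'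
    rw [hvd_eq]
    field_simp
    ring
  have hae2 : ∀ᵐ t ∂(volume : Measure ℝ), t ∈ I → tauApp q r s f g v1d t = lam * f t := by
    filter_upwards [H.rpos] with t hr ht
    have hrt : r t ≠ 0 := (hr ht).ne'
    rw [tauApp, hv1d_eq]
    field_simp
    ring
  have hsol : IsSolution I p q r s lam f := ⟨vd, g, v1d, ⟨had1, hae1, had2⟩, hae2⟩
  have hfx₀ : f x₀ = 0 := by simp only [hf, hYx₀]
  have hgx₀ : g x₀ = 1 := by simp only [hg, hYx₀]
  refine ⟨f, hsol, hfx₀, ?_⟩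
  intro c₂ hc
  by_contra hc₂
  have hv0 : ∀ t ∈ I, f t = 0 := by
    intro t ht
    rcases mul_eq_zero.1 (hc t ht) with h | h
    · exact absurd h hc₂
    · exact h
  obtain ⟨t₂, ht₂gt, ht₂b⟩ := exists_right_real hx₀.2
  have ht₂I : t₂ ∈ I := ⟨lt_trans hx₀.1 (EReal.coe_lt_coe_iff.2 ht₂gt), ht₂b⟩
  have hIccsub : Icc x₀ t₂ ⊆ I := hI.out hx₀ ht₂I
  have hgc : ContinuousOn g (Icc x₀ t₂) :=
    continuous_snd.comp_continuousOn (hcont x₀ t₂ hx₀ ht₂I).1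
  have hcw : ContinuousWithinAt g (Icc x₀ t₂) x₀ := hgc x₀ (left_mem_Icc.mpr ht₂gt.le)
  have hev : g ⁻¹' Ioi (1/2 : ℝ) ∈ nhdsWithin x₀ (Icc x₀ t₂) :=
    hcw (isOpen_Ioi.mem_nhds (by rw [hgx₀]; norm_num))
  rw [mem_nhdsWithin] at hev
  obtain ⟨U, hUopen, hx₀U, hU⟩ := hev
  obtain ⟨ε, hε, hball⟩ := Metric.isOpen_iff.1 hUopen x₀ hx₀U
  set t₁ : ℝ := min (x₀ + ε/2) t₂ with ht₁def
  have ht₁gt : x₀ < t₁ := lt_min (by linarith) ht₂gt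
  have ht₁le : t₁ ≤ t₂ := min_le_right _ _
  have ht₁I : t₁ ∈ I := hIccsub ⟨ht₁gt.le, ht₁le⟩
  have hsubU : Icc x₀ t₁ ⊆ U ∩ Icc x₀ t₂ := by
    intro τ hτ
    have h1 : τ ≤ x₀ + ε/2 := hτ.2.trans (min_le_left _ _)
    refine ⟨hball ?_, ⟨hτ.1, hτ.2.trans ht₁le⟩⟩
    rw [Metric.mem_ball, Real.dist_eq, abs_lt]
    constructor <;> [linarith [hτ.1]; linarith]
  have hg_half : ∀ τ ∈ Icc x₀ t₁, (1/2 : ℝ) < g τ := fun τ hτ => hU (hsubU hτ)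
  obtain ⟨⟨ii1, ee1⟩, _⟩ := hFTC x₀ hx₀ t₁ ht₁I
  have h0 : (0 : ℝ) = ∫ τ in x₀..t₁, vd τ := by
    rw [← ee1, hv0 x₀ hx₀, hv0 t₁ ht₁I, sub_zero]
  have hIocsub : Ioc x₀ t₁ ⊆ I := fun τ hτ => hIccsub ⟨hτ.1.le, hτ.2.trans ht₁le⟩
  have hint : IntegrableOn vd (Ioc x₀ t₁) volume := ii1.1
  have hpos : 0 < ∫ τ in Ioc x₀ t₁, vd τ := by
    rw [setIntegral_pos_iff_support_of_nonneg_ae ?_ hint]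
    · have hae : ∀ᵐ τ ∂(volume : Measure ℝ),
          τ ∈ Ioc x₀ t₁ → τ ∈ (Function.support vd ∩ Ioc x₀ t₁) := by
        filter_upwards [H.ppos] with τ hp hmem
        have hpτ : 0 < p τ := hp (hIocsub hmem)
        have hgτ : (1/2:ℝ) < g τ := hg_half τ ⟨hmem.1.le, hmem.2⟩
        have : 0 < vd τ := by
          rw [hvd_eq, hv0 τ (hIocsub hmem)]
          have : 0 < 1 / p τ := by positivity
          nlinarith
        exact ⟨this.ne', hmem⟩
      have hle := measure_mono_ae (Filter.Eventually.mono hae fun τ h => h)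
      have hIoc : 0 < volume (Ioc x₀ t₁) := by
        rw [Real.volume_Ioc]
        exact ENNReal.ofReal_pos.2 (by linarith)
      exact lt_of_lt_of_le hIoc hle
    · filter_upwards [ae_restrict_of_ae H.ppos, ae_restrict_mem measurableSet_Ioc] with τ hp hmem
      have hpτ : 0 < p τ := hp (hIocsub hmem)
      have hgτ : (1/2:ℝ) < g τ := hg_half τ ⟨hmem.1.le, hmem.2⟩
      show (0:ℝ) ≤ vd τ
      rw [hvd_eq, hv0 τ (hIocsub hmem)]
      have : 0 < 1 / p τ := by positivity
      nlinarith
  rw [intervalIntegral.integral_of_le ht₁gt.le] at h0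
  linarith

lemma hasAEDerivOn_linComb {I : Set ℝ} {f fd g gd : ℝ → ℝ} (h1 : HasAEDerivOn I f fd)
    (h2 : HasAEDerivOn I g gd) (c₁ c₂ : ℝ) :
    HasAEDerivOn I (fun t => c₁ * f t + c₂ * g t) (fun t => c₁ * fd t + c₂ * gd t) := by
  intro x hx y hy
  obtain ⟨i1, e1⟩ := h1 x hx y hy
  obtain ⟨i2, e2⟩ := h2 x hx y hy
  refine ⟨(i1.const_mul c₁).add (i2.const_mul c₂), ?_⟩
  rw [intervalIntegral.integral_add (i1.const_mul c₁) (i2.const_mul c₂),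
    intervalIntegral.integral_const_mul, intervalIntegral.integral_const_mul, ← e1, ← e2]
  ring

lemma isSolution_linComb {I : Set ℝ} {p q r s : ℝ → ℝ} {lam : ℝ} {u v : ℝ → ℝ}
    (hu : IsSolution I p q r s lam u) (hv : IsSolution I p q r s lam v) (c₁ c₂ : ℝ) :
    IsSolution I p q r s lam (fun t => c₁ * u t + c₂ * v t) := by
  obtain ⟨ud, u1, u1d, ⟨hu_ac, hu1eq, hu1_ac⟩, hueq⟩ := hu
  obtain ⟨vd, v1, v1d, ⟨hv_ac, hv1eq, hv1_ac⟩, hveq⟩ := hv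
  refine ⟨fun t => c₁ * ud t + c₂ * vd t, fun t => c₁ * u1 t + c₂ * v1 t,
    fun t => c₁ * u1d t + c₂ * v1d t,
    ⟨hasAEDerivOn_linComb hu_ac hv_ac c₁ c₂, ?_, hasAEDerivOn_linComb hu1_ac hv1_ac c₁ c₂⟩, ?_⟩
  · filter_upwards [hu1eq, hv1eq] with t h1 h2 ht
    rw [h1 ht, h2 ht]
    ring
  · filter_upwards [hueq, hveq] with t h1 h2 ht
    have e1 := h1 ht
    have e2 := h2 ht
    rw [tauApp] at e1 e2 ⊢
    linear_combination c₁ * e1 + c₂ * e2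


end SLEapp

/-- Theorem 4.2 (i) ⇔ (iii): `τ - λ` is disconjugate on `(a,b)` if and only if every pair
of real-valued linearly independent solutions `u₁, u₂` of `(τ - λ) u = 0` on `(a,b)`
satisfies `u₁(x₁) u₂(x₂) − u₁(x₂) u₂(x₁) ≠ 0` for all distinct `x₁, x₂ ∈ (a,b)`. -/
theorem disconjugate_iff_two_point_determinant
    (a b : EReal) (p q r s : ℝ → ℝ) (H : SLH a b p q r s) (lam : ℝ) :
    Disconjugate (EI a b) p q r s lam ↔
      ∀ u₁ u₂ : ℝ → ℝ, IsSolution (EI a b) p q r s lam u₁ →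
        IsSolution (EI a b) p q r s lam u₂ → LinIndepOn (EI a b) u₁ u₂ →
        ∀ x₁ ∈ EI a b, ∀ x₂ ∈ EI a b, x₁ ≠ x₂ →
          u₁ x₁ * u₂ x₂ - u₁ x₂ * u₂ x₁ ≠ 0 := by

  constructor
  · intro hdisc u₁ u₂ hs1 hs2 hind x₁ hx₁ x₂ hx₂ hne hdet0
    -- helper : a nontrivial combination vanishing at x₁ and x₂ gives a contradiction
    have key : ∀ c₁ c₂ : ℝ, ¬(c₁ = 0 ∧ c₂ = 0) →
        c₁ * u₁ x₁ + c₂ * u₂ x₁ = 0 → c₁ * u₁ x₂ + c₂ * u₂ x₂ = 0 → False := by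
      intro c₁ c₂ hc h1 h2
      set w : ℝ → ℝ := fun t => c₁ * u₁ t + c₂ * u₂ t with hw
      have hws : IsSolution (EI a b) p q r s lam w := isSolution_linComb hs1 hs2 c₁ c₂
      have hwnt : NontrivOn (EI a b) w := by
        by_contra hnt
        rw [NontrivOn] at hnt
        push_neg at hnt
        refine hc (hind c₁ c₂ ?_)
        intro x hx
        have := hnt x hx
        simpa [hw] using this
      exact hne (hdisc w hws hwnt x₁ hx₁ x₂ hx₂ h1 h2)
    by_cases hA : u₁ x₁ = 0 ∧ u₂ x₁ = 0
    · by_cases hB : u₁ x₂ = 0 ∧ u₂ x₂ = 0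
      · have hu₁nt : NontrivOn (EI a b) u₁ := by
          by_contra hnt
          rw [NontrivOn] at hnt
          push_neg at hnt
          have h := hind 1 0 (fun x hx => by rw [hnt x hx]; ring)
          exact one_ne_zero h.1
        exact hne (hdisc u₁ hs1 hu₁nt x₁ hx₁ x₂ hx₂ hA.1 hB.1)
      · refine key (u₂ x₂) (-(u₁ x₂)) ?_ ?_ ?_
        · rintro ⟨h1, h2⟩
          exact hB ⟨neg_eq_zero.1 h2, h1⟩
        · rw [hA.1, hA.2]; ring
        · ring
    · refine key (u₂ x₁) (-(u₁ x₁)) ?_ ?_ ?_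
      · rintro ⟨h1, h2⟩
        exact hA ⟨neg_eq_zero.1 h2, h1⟩
      · ring
      · linear_combination -hdet0
  · intro hdet u hu hnt x hx y hy hux huy
    by_contra hxy
    obtain ⟨x₀, hx₀, hux₀⟩ := hnt
    obtain ⟨v, hvsol, hvx₀, hvkey⟩ := exists_partner H lam hx₀
    have hind : LinIndepOn (EI a b) u v := by
      intro c₁ c₂ hcomb
      have h₀ := hcomb x₀ hx₀
      rw [hvx₀, mul_zero, add_zero] at h₀
      have hc₁ : c₁ = 0 := by
        rcases mul_eq_zero.1 h₀ with h | h
        · exact h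
        · exact absurd h hux₀
      subst hc₁
      refine ⟨rfl, hvkey c₂ ?_⟩
      intro t ht
      have := hcomb t ht
      rwa [zero_mul, zero_add] at this
    exact hdet u v hu hvsol hind x hx y hy hxy (by rw [hux, huy]; ring)
end

section
/- Reduction of order (Lemma 4.1): Assume Hypothesis (H). Suppose λ ∈ ℝ, (c,d) ⊆ (a,b), and x₀ ∈ (c,d). If u₁ is a solution of (τ − λ)u = 0 on (c,d) with u₁(x) ≠ 0 for all x ∈ (c,d), then the function u₂ defined by u₂(x) := u₁(x)·∫_{x₀}^{x} dt/(p(t)·u₁(t)²) for x ∈ (c,d) is also a solution of (τ − λ)u = 0 on (c,d). Moreover, u₁ and u₂ are linearly independent on (c,d). -/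
open MeasureTheory Set Filter intervalIntegral

lemma triangle_swap {x y : ℝ} {fd gd : ℝ → ℝ}
    (hfd : IntegrableOn fd (Set.Ioc x y) volume) (hgd : IntegrableOn gd (Set.Ioc x y) volume) :
    ∫ t in Set.Ioc x y, gd t * ∫ s in Set.Ioc t y, fd s =
      ∫ s in Set.Ioc x y, fd s * ∫ t in Set.Ioo x s, gd t := by
  set μ := volume.restrict (Set.Ioc x y) with hμ
  set F : ℝ → ℝ → ℝ := fun t s => ({z : ℝ × ℝ | z.1 < z.2}.indicator
    (fun z => gd z.1 * fd z.2)) (t, s) with hF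
  have hmeas : MeasurableSet {z : ℝ × ℝ | z.1 < z.2} :=
    measurableSet_lt measurable_fst measurable_snd
  have hint : Integrable (Function.uncurry F) (μ.prod μ) := by
    have h1 : Integrable (fun z : ℝ × ℝ => gd z.1 * fd z.2) (μ.prod μ) :=
      Integrable.mul_prod hgd hfd
    exact (h1.indicator hmeas).congr (Filter.Eventually.of_forall fun z => by
      simp [Function.uncurry, hF])
  have hswap := MeasureTheory.integral_integral_swap hint
  have hL : ∫ t, ∫ s, F t s ∂μ ∂μ = ∫ t in Set.Ioc x y, gd t * ∫ s in Set.Ioc t y, fd s := by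
    refine setIntegral_congr_ae measurableSet_Ioc (Filter.Eventually.of_forall fun t ht => ?_)
    have hfun : (fun s => F t s) = (Set.Ioi t).indicator (fun s => gd t * fd s) := by
      ext s
      by_cases h : t < s <;> simp [hF, Set.indicator, h, Set.mem_Ioi]
    rw [hfun, MeasureTheory.integral_indicator measurableSet_Ioi, hμ,
      Measure.restrict_restrict measurableSet_Ioi]
    have hset : Set.Ioi t ∩ Set.Ioc x y = Set.Ioc t y := by
      ext u
      simp only [Set.mem_inter_iff, Set.mem_Ioi, Set.mem_Ioc]
      constructor
      · rintro ⟨h1, _, h3⟩; exact ⟨h1, h3⟩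
      · rintro ⟨h1, h2⟩; exact ⟨h1, ht.1.trans h1, h2⟩
    rw [hset, MeasureTheory.integral_const_mul]
  have hR : ∫ s, ∫ t, F t s ∂μ ∂μ = ∫ s in Set.Ioc x y, fd s * ∫ t in Set.Ioo x s, gd t := by
    refine setIntegral_congr_ae measurableSet_Ioc (Filter.Eventually.of_forall fun u hu => ?_)
    have hfun : (fun t => F t u) = (Set.Iio u).indicator (fun t => gd t * fd u) := by
      ext t
      by_cases h : t < u <;> simp [hF, Set.indicator, h, Set.mem_Iio]
    rw [hfun, MeasureTheory.integral_indicator measurableSet_Iio, hμ,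
      Measure.restrict_restrict measurableSet_Iio]
    have hset : Set.Iio u ∩ Set.Ioc x y = Set.Ioo x u := by
      ext t
      simp only [Set.mem_inter_iff, Set.mem_Iio, Set.mem_Ioo, Set.mem_Ioc]
      constructor
      · rintro ⟨h1, h2, _⟩; exact ⟨h2, h1⟩
      · rintro ⟨h1, h2⟩; exact ⟨h2, h1, (h2.le.trans hu.2)⟩
    rw [hset]
    rw [show (fun t => gd t * fd u) = (fun t => fd u * gd t) by ext t; ring,
      MeasureTheory.integral_const_mul]
  rw [← hL, ← hR, hswap]

lemma cont_of_rep {x y : ℝ} (hxy : x ≤ y) {f fd : ℝ → ℝ}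
    (hfd : IntegrableOn fd (Set.Ioc x y) volume)
    (hf : ∀ t ∈ Set.Icc x y, f t = f x + ∫ s in Set.Ioc x t, fd s) :
    ContinuousOn f (Set.Icc x y) := by
  have h1 : IntegrableOn fd (Set.Icc x y) volume :=
    (integrableOn_Icc_iff_integrableOn_Ioc).2 hfd
  have h2 := intervalIntegral.continuousOn_primitive (a := x) (b := y) (μ := volume) h1
  exact (continuousOn_const.add h2).congr hf

lemma ftc_mul_core {x y : ℝ} (hxy : x ≤ y) {f g fd gd : ℝ → ℝ}
    (hfd : IntegrableOn fd (Set.Ioc x y) volume) (hgd : IntegrableOn gd (Set.Ioc x y) volume)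
    (hf : ∀ t ∈ Set.Icc x y, f t = f x + ∫ s in Set.Ioc x t, fd s)
    (hg : ∀ t ∈ Set.Icc x y, g t = g x + ∫ s in Set.Ioc x t, gd s) :
    f y * g y - f x * g x = ∫ t in Set.Ioc x y, (fd t * g t + f t * gd t) := by
  have hfc : ContinuousOn f (Set.Icc x y) := cont_of_rep hxy hfd hf
  have hgc : ContinuousOn g (Set.Icc x y) := cont_of_rep hxy hgd hg
  -- integrability
  have hfdg : IntegrableOn (fun t => fd t * g t) (Set.Ioc x y) volume :=
    (((integrableOn_Icc_iff_integrableOn_Ioc).2 hfd).mul_continuousOn hgc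
      isCompact_Icc).mono_set Set.Ioc_subset_Icc_self
  have hfgd : IntegrableOn (fun t => f t * gd t) (Set.Ioc x y) volume :=
    (((integrableOn_Icc_iff_integrableOn_Ioc).2 hgd).continuousOn_mul hfc
      isCompact_Icc).mono_set Set.Ioc_subset_Icc_self
  have hgdfx : IntegrableOn (fun t => gd t * (f t - f x)) (Set.Ioc x y) volume := by
    have : IntegrableOn (fun t => gd t * (f t - f x)) (Set.Icc x y) volume :=
      ((integrableOn_Icc_iff_integrableOn_Ioc).2 hgd).mul_continuousOn
        (hfc.sub continuousOn_const) isCompact_Icc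
    exact this.mono_set Set.Ioc_subset_Icc_self
  -- split of tail integral
  have hsplit : ∀ t ∈ Set.Ioc x y,
      (∫ s in Set.Ioc t y, fd s) = (∫ s in Set.Ioc x y, fd s) - ∫ s in Set.Ioc x t, fd s := by
    intro t ht
    have : (∫ s in Set.Ioc x t, fd s) + (∫ s in Set.Ioc t y, fd s) = ∫ s in Set.Ioc x y, fd s := by
      rw [← MeasureTheory.setIntegral_union (Set.Ioc_disjoint_Ioc_of_le le_rfl) measurableSet_Ioc
        (hfd.mono_set (Set.Ioc_subset_Ioc_right ht.2)) (hfd.mono_set (Set.Ioc_subset_Ioc_left ht.1.le)),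
        Set.Ioc_union_Ioc_eq_Ioc ht.1.le ht.2]
    linarith
  -- key identity via Fubini
  have hkey : (∫ s in Set.Ioc x y, fd s) * (∫ t in Set.Ioc x y, gd t) =
      (∫ t in Set.Ioc x y, gd t * (f t - f x)) + ∫ t in Set.Ioc x y, fd t * (g t - g x) := by
    have h1 : ∫ t in Set.Ioc x y, gd t * ∫ s in Set.Ioc t y, fd s =
        ∫ s in Set.Ioc x y, fd s * (g s - g x) := by
      rw [triangle_swap hfd hgd]
      refine setIntegral_congr_ae measurableSet_Ioc (Filter.Eventually.of_forall fun u hu => ?_)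
      rw [← MeasureTheory.integral_Ioc_eq_integral_Ioo]
      rw [hg u ⟨hu.1.le, hu.2⟩]
      ring
    have h2 : ∀ t ∈ Set.Ioc x y, gd t * ∫ s in Set.Ioc t y, fd s =
        gd t * (∫ s in Set.Ioc x y, fd s) - gd t * (f t - f x) := by
      intro t ht
      have hft : (∫ s in Set.Ioc x t, fd s) = f t - f x := by
        rw [hf t ⟨ht.1.le, ht.2⟩]; ring
      rw [hsplit t ht, hft]
      ring
    have h3 : ∫ t in Set.Ioc x y, gd t * ∫ s in Set.Ioc t y, fd s =
        (∫ t in Set.Ioc x y, gd t * (∫ s in Set.Ioc x y, fd s)) -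
          ∫ t in Set.Ioc x y, gd t * (f t - f x) := by
      rw [← MeasureTheory.integral_sub (hgd.mul_const _) hgdfx]
      exact setIntegral_congr_ae measurableSet_Ioc (Filter.Eventually.of_forall h2)
    rw [h1] at h3
    rw [MeasureTheory.integral_mul_const] at h3
    linarith
  -- conclude
  have hFy := hf y ⟨hxy, le_rfl⟩
  have hGy := hg y ⟨hxy, le_rfl⟩
  have hsum : ∫ t in Set.Ioc x y, (fd t * g t + f t * gd t) =
      (∫ t in Set.Ioc x y, fd t * (g t - g x)) + (∫ t in Set.Ioc x y, gd t * (f t - f x))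
        + (g x * ∫ t in Set.Ioc x y, fd t) + (f x * ∫ t in Set.Ioc x y, gd t) := by
    have e1 : IntegrableOn (fun t => fd t * (g t - g x)) (Set.Ioc x y) volume :=
      (((integrableOn_Icc_iff_integrableOn_Ioc).2 hfd).mul_continuousOn
        (hgc.sub continuousOn_const) isCompact_Icc).mono_set Set.Ioc_subset_Icc_self
    have : ∫ t in Set.Ioc x y, (fd t * g t + f t * gd t) =
        ∫ t in Set.Ioc x y, ((fd t * (g t - g x) + gd t * (f t - f x))
          + (g x * fd t + f x * gd t)) := by
      refine setIntegral_congr_ae measurableSet_Ioc (Filter.Eventually.of_forall fun t ht => ?_)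
      ring
    have e2 : IntegrableOn (fun t => fd t * (g t - g x) + gd t * (f t - f x))
        (Set.Ioc x y) volume := e1.add hgdfx
    have e3 : IntegrableOn (fun t => g x * fd t + f x * gd t) (Set.Ioc x y) volume :=
      (hfd.const_mul _).add (hgd.const_mul _)
    have e4 : IntegrableOn (fun t => g x * fd t) (Set.Ioc x y) volume := hfd.const_mul _
    have e5 : IntegrableOn (fun t => f x * gd t) (Set.Ioc x y) volume := hgd.const_mul _
    rw [this, MeasureTheory.integral_add e2 e3, MeasureTheory.integral_add e1 hgdfx,
      MeasureTheory.integral_add e4 e5,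
      MeasureTheory.integral_const_mul, MeasureTheory.integral_const_mul]
    ring
  rw [hsum, hFy, hGy]
  linear_combination hkey

lemma null_sol {x y : ℝ} (hxy : x ≤ y) {ψ h : ℝ → ℝ}
    (hψ : IntegrableOn ψ (Set.Ioc x y) volume)
    (hcont : ContinuousOn h (Set.Icc x y))
    (heq : ∀ t ∈ Set.Icc x y, h t = ∫ s in Set.Ioc x t, ψ s * h s) :
    ∀ t ∈ Set.Icc x y, h t = 0 := by
  -- integrability of ψ * h on Ioc x y
  have hψh : IntegrableOn (fun s => ψ s * h s) (Set.Ioc x y) volume :=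
    (((integrableOn_Icc_iff_integrableOn_Ioc).2 hψ).mul_continuousOn hcont
      isCompact_Icc).mono_set Set.Ioc_subset_Icc_self
  set S : Set ℝ := {t ∈ Set.Icc x y | ∀ u ∈ Set.Icc x t, h u = 0} with hS
  have hx0 : h x = 0 := by
    have := heq x ⟨le_rfl, hxy⟩
    simpa using this
  have hxS : x ∈ S := ⟨⟨le_rfl, hxy⟩, fun u hu => by
    have : u = x := le_antisymm hu.2 hu.1
    rw [this]; exact hx0⟩
  have hbdd : BddAbove S := ⟨y, fun t ht => ht.1.2⟩
  set T := sSup S with hT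
  have hxT : x ≤ T := le_csSup hbdd hxS
  have hTy : T ≤ y := csSup_le ⟨x, hxS⟩ fun t ht => ht.1.2
  -- h vanishes on Ico x T
  have hIco : ∀ u ∈ Set.Ico x T, h u = 0 := by
    intro u hu
    by_contra hne
    have hub : ∀ t ∈ S, t ≤ u := by
      intro t ht
      by_contra hlt
      push_neg at hlt
      exact hne (ht.2 u ⟨hu.1, hlt.le⟩)
    exact absurd (csSup_le ⟨x, hxS⟩ hub) (not_le.2 hu.2)
  -- h T = 0
  have hT0 : h T = 0 := by
    have := heq T ⟨hxT, hTy⟩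
    rw [this, MeasureTheory.integral_Ioc_eq_integral_Ioo]
    have : ∀ s ∈ Set.Ioo x T, ψ s * h s = 0 := by
      intro u hu
      rw [hIco u ⟨hu.1.le, hu.2⟩, mul_zero]
    calc ∫ s in Set.Ioo x T, ψ s * h s = ∫ s in Set.Ioo x T, (0:ℝ) :=
          setIntegral_congr_ae measurableSet_Ioo (Filter.Eventually.of_forall this)
      _ = 0 := by simp
  have hTS : T ∈ S := ⟨⟨hxT, hTy⟩, fun u hu =>
    (lt_or_eq_of_le hu.2).elim (fun hlt => hIco u ⟨hu.1, hlt⟩) (fun heqq => heqq ▸ hT0)⟩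
  -- show T = y
  have hTeqy : T = y := by
    by_contra hTne
    have hTlty : T < y := lt_of_le_of_ne hTy hTne
    -- continuity of the primitive of |ψ| at T
    have habs : IntegrableOn (fun s => |ψ s|) (Set.Icc T y) volume := by
      refine (integrableOn_Icc_iff_integrableOn_Ioc).2 ?_
      exact (hψ.mono_set (Set.Ioc_subset_Ioc_left hxT)).abs
    have hprim := intervalIntegral.continuousOn_primitive (a := T) (b := y) (μ := volume) habs
    have hcT : ContinuousWithinAt (fun u => ∫ s in Set.Ioc T u, |ψ s|) (Set.Icc T y) T :=
      hprim T ⟨le_rfl, hTlty.le⟩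
    have h0 : (∫ s in Set.Ioc T T, |ψ s|) = 0 := by simp
    obtain ⟨δ, hδpos, hδ⟩ := Metric.continuousWithinAt_iff.mp hcT (1/2) (by norm_num)
    set y' := min (T + δ/2) y with hy'
    have hTy' : T < y' := lt_min (by linarith) hTlty
    have hy'y : y' ≤ y := min_le_right _ _
    have hy'mem : y' ∈ Set.Icc T y := ⟨hTy'.le, hy'y⟩
    have hsmall : ∀ u ∈ Set.Icc T y', (∫ s in Set.Ioc T u, |ψ s|) ≤ 1/2 := by
      intro u hu
      have hu1 : u ∈ Set.Icc T y := ⟨hu.1, hu.2.trans hy'y⟩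
      have hd : dist u T < δ := by
        rw [Real.dist_eq, abs_sub_lt_iff]
        constructor
        · have : u ≤ T + δ/2 := hu.2.trans (min_le_left _ _)
          linarith
        · linarith [hu.1]
      have := hδ hu1 hd
      rw [Real.dist_eq, h0, sub_zero] at this
      exact (le_abs_self _).trans this.le
    -- max of |h| on Icc T y'
    have hKcomp : IsCompact (Set.Icc T y') := isCompact_Icc
    have hKne : (Set.Icc T y').Nonempty := ⟨T, le_rfl, hTy'.le⟩
    have hKsub : Set.Icc T y' ⊆ Set.Icc x y := fun u hu => ⟨hxT.trans hu.1, hu.2.trans hy'y⟩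
    have hhK : ContinuousOn (fun u => |h u|) (Set.Icc T y') := (hcont.mono hKsub).abs
    obtain ⟨t₁, ht₁K, ht₁max⟩ := hKcomp.exists_isMaxOn hKne hhK
    set M := |h t₁| with hM
    have hM0 : 0 ≤ M := abs_nonneg _
    -- bound: for u in Icc T y', h u = ∫_{Ioc T u} ψ h and |h u| ≤ M/2
    have hbound : ∀ u ∈ Set.Icc T y', |h u| ≤ M * (1/2) := by
      intro u hu
      have hu1 : u ∈ Set.Icc x y := hKsub hu
      have hsplit : h u = ∫ s in Set.Ioc T u, ψ s * h s := by
        have h1 := heq u hu1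
        have h2 := heq T ⟨hxT, hTy⟩
        have hun : Set.Ioc x T ∪ Set.Ioc T u = Set.Ioc x u := Set.Ioc_union_Ioc_eq_Ioc hxT hu.1
        have hint1 : IntegrableOn (fun s => ψ s * h s) (Set.Ioc x T) volume :=
          hψh.mono_set (Set.Ioc_subset_Ioc_right hTy)
        have hint2 : IntegrableOn (fun s => ψ s * h s) (Set.Ioc T u) volume :=
          hψh.mono_set (fun z hz => ⟨hxT.trans_lt hz.1, hz.2.trans hu1.2⟩)
        have := MeasureTheory.setIntegral_union (Set.Ioc_disjoint_Ioc_of_le le_rfl) measurableSet_Ioc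
          hint1 hint2 (f := fun s => ψ s * h s) (μ := volume)
        rw [hun] at this
        rw [h1, this, ← h2, hT0, zero_add]
      have hint2 : IntegrableOn (fun s => ψ s * h s) (Set.Ioc T u) volume :=
        hψh.mono_set (fun z hz => ⟨hxT.trans_lt hz.1, hz.2.trans hu1.2⟩)
      have habs2 : IntegrableOn (fun s => |ψ s|) (Set.Ioc T u) volume :=
        (hψ.mono_set (fun z hz => ⟨hxT.trans_lt hz.1, hz.2.trans hu1.2⟩)).abs
      calc |h u| = |∫ s in Set.Ioc T u, ψ s * h s| := by rw [hsplit]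
        _ ≤ ∫ s in Set.Ioc T u, |ψ s * h s| :=
            MeasureTheory.norm_integral_le_integral_norm (μ := volume.restrict (Set.Ioc T u))
              (fun s => ψ s * h s)
        _ ≤ ∫ s in Set.Ioc T u, |ψ s| * M := by
            refine MeasureTheory.setIntegral_mono_on hint2.abs (habs2.mul_const _)
              measurableSet_Ioc (fun z hz => ?_)
            rw [abs_mul]
            refine mul_le_mul_of_nonneg_left ?_ (abs_nonneg _)
            exact ht₁max ⟨hz.1.le, hz.2.trans hu.2⟩
        _ = (∫ s in Set.Ioc T u, |ψ s|) * M := by rw [MeasureTheory.integral_mul_const]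
        _ ≤ (1/2) * M := mul_le_mul_of_nonneg_right (hsmall u hu) hM0
        _ = M * (1/2) := by ring
    have hMz : M = 0 := by
      have := hbound t₁ ht₁K
      rw [← hM] at this
      linarith
    have hy'S : y' ∈ S := by
      refine ⟨⟨hxT.trans hTy'.le, hy'y⟩, fun u hu => ?_⟩
      rcases le_or_gt u T with hcase | hcase
      · exact hTS.2 u ⟨hu.1, hcase⟩
      · have : |h u| ≤ M := ht₁max ⟨hcase.le, hu.2⟩
        rw [hMz] at this
        exact abs_nonpos_iff.mp this
    have : y' ≤ T := le_csSup hbdd hy'S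
    linarith

  intro t ht
  have : t ≤ T := hTeqy ▸ ht.2
  exact hTS.2 t ⟨ht.1, this⟩


lemma hasAEDerivOn_of_core {I : Set ℝ} {f fd : ℝ → ℝ}
    (core : ∀ x ∈ I, ∀ y ∈ I, x ≤ y → IntegrableOn fd (Set.Ioc x y) volume ∧
      f y - f x = ∫ t in Set.Ioc x y, fd t) :
    HasAEDerivOn I f fd := by
  intro x hx y hy
  rcases le_total x y with hxy | hxy
  · obtain ⟨h1, h2⟩ := core x hx y hy hxy
    exact ⟨(intervalIntegrable_iff_integrableOn_Ioc_of_le hxy).2 h1,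
      by rw [intervalIntegral.integral_of_le hxy]; exact h2⟩
  · obtain ⟨h1, h2⟩ := core y hy x hx hxy
    refine ⟨((intervalIntegrable_iff_integrableOn_Ioc_of_le hxy).2 h1).symm, ?_⟩
    rw [intervalIntegral.integral_symm, intervalIntegral.integral_of_le hxy]
    linarith

lemma rep_of_hasAEDerivOn {I : Set ℝ}
    (hI : ∀ ⦃u⦄, u ∈ I → ∀ ⦃v⦄, v ∈ I → Set.uIcc u v ⊆ I)
    {f fd : ℝ → ℝ} (hf : HasAEDerivOn I f fd) {x y : ℝ}
    (hx : x ∈ I) (hy : y ∈ I) (hxy : x ≤ y) :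
    IntegrableOn fd (Set.Ioc x y) volume ∧
      ∀ t ∈ Set.Icc x y, f t = f x + ∫ s in Set.Ioc x t, fd s := by
  constructor
  · exact (intervalIntegrable_iff_integrableOn_Ioc_of_le hxy).1 (hf x hx y hy).1
  · intro t ht
    have htI : t ∈ I := hI hx hy (by rw [Set.uIcc_of_le hxy]; exact ht)
    have h2 := (hf x hx t htI).2
    rw [intervalIntegral.integral_of_le ht.1] at h2
    linarith

lemma HasAEDerivOn.addAE {I : Set ℝ} {f g fd gd : ℝ → ℝ}
    (hf : HasAEDerivOn I f fd) (hg : HasAEDerivOn I g gd) :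
    HasAEDerivOn I (fun t => f t + g t) (fun t => fd t + gd t) := by
  intro x hx y hy
  obtain ⟨hf1, hf2⟩ := hf x hx y hy
  obtain ⟨hg1, hg2⟩ := hg x hx y hy
  refine ⟨hf1.add hg1, ?_⟩
  rw [intervalIntegral.integral_add hf1 hg1]
  show f y + g y - (f x + g x) = _
  linarith

lemma HasAEDerivOn.mulAE {I : Set ℝ}
    (hI : ∀ ⦃u⦄, u ∈ I → ∀ ⦃v⦄, v ∈ I → Set.uIcc u v ⊆ I)
    {f g fd gd : ℝ → ℝ}
    (hf : HasAEDerivOn I f fd) (hg : HasAEDerivOn I g gd) :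
    HasAEDerivOn I (fun t => f t * g t) (fun t => fd t * g t + f t * gd t) := by
  refine hasAEDerivOn_of_core fun x hx y hy hxy => ?_
  obtain ⟨hfi, hfrep⟩ := rep_of_hasAEDerivOn hI hf hx hy hxy
  obtain ⟨hgi, hgrep⟩ := rep_of_hasAEDerivOn hI hg hx hy hxy
  have hfc := cont_of_rep hxy hfi hfrep
  have hgc := cont_of_rep hxy hgi hgrep
  have h1 : IntegrableOn (fun t => fd t * g t) (Set.Ioc x y) volume :=
    (((integrableOn_Icc_iff_integrableOn_Ioc).2 hfi).mul_continuousOn hgc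
      isCompact_Icc).mono_set Set.Ioc_subset_Icc_self
  have h2 : IntegrableOn (fun t => f t * gd t) (Set.Ioc x y) volume :=
    (((integrableOn_Icc_iff_integrableOn_Ioc).2 hgi).continuousOn_mul hfc
      isCompact_Icc).mono_set Set.Ioc_subset_Icc_self
  exact ⟨h1.add h2, ftc_mul_core hxy hfi hgi hfrep hgrep⟩

lemma HasAEDerivOn.invAE {I : Set ℝ}
    (hI : ∀ ⦃u⦄, u ∈ I → ∀ ⦃v⦄, v ∈ I → Set.uIcc u v ⊆ I)
    {f fd : ℝ → ℝ} (hf : HasAEDerivOn I f fd) (hne : ∀ t ∈ I, f t ≠ 0) :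
    HasAEDerivOn I (fun t => 1 / f t) (fun t => -(fd t / f t ^ 2)) := by
  refine hasAEDerivOn_of_core fun x hx y hy hxy => ?_
  obtain ⟨hfi, hfrep⟩ := rep_of_hasAEDerivOn hI hf hx hy hxy
  have hfc := cont_of_rep hxy hfi hfrep
  have hsubI : Set.Icc x y ⊆ I := by rw [← Set.uIcc_of_le hxy]; exact hI hx hy
  have hne' : ∀ t ∈ Set.Icc x y, f t ≠ 0 := fun t ht => hne t (hsubI ht)
  have hc2 : ContinuousOn (fun t => 1 / f t ^ 2) (Set.Icc x y) :=
    continuousOn_const.div (hfc.pow 2) (fun t ht => pow_ne_zero 2 (hne' t ht))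
  have hwd : IntegrableOn (fun t => -(fd t / f t ^ 2)) (Set.Ioc x y) volume := by
    have h0 : IntegrableOn (fun t => fd t * (1 / f t ^ 2)) (Set.Icc x y) volume :=
      ((integrableOn_Icc_iff_integrableOn_Ioc).2 hfi).mul_continuousOn hc2 isCompact_Icc
    have h0' : IntegrableOn (fun t => -(fd t * (1 / f t ^ 2))) (Set.Ioc x y) volume :=
      (h0.mono_set Set.Ioc_subset_Icc_self).neg
    refine h0'.congr_fun (fun t _ => ?_) measurableSet_Ioc
    field_simp
  set w : ℝ → ℝ := fun t => 1 / f x + ∫ s in Set.Ioc x t, -(fd s / f s ^ 2) with hw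
  have hwx : w x = 1 / f x := by simp [hw]
  have hwrep : ∀ t ∈ Set.Icc x y, w t = w x + ∫ s in Set.Ioc x t, -(fd s / f s ^ 2) := by
    intro t _; rw [hwx]
  have hwc : ContinuousOn w (Set.Icc x y) := cont_of_rep hxy hwd hwrep
  have hfxwx : f x * w x = 1 := by
    rw [hwx]; field_simp [hne' x ⟨le_rfl, hxy⟩]
  have hmain : ∀ t ∈ Set.Icc x y, f t * w t - 1 =
      ∫ s in Set.Ioc x t, (fd s / f s) * (f s * w s - 1) := by
    intro t ht
    have hxt : x ≤ t := ht.1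
    have hkey := ftc_mul_core hxt (hfi.mono_set (Set.Ioc_subset_Ioc_right ht.2))
      (hwd.mono_set (Set.Ioc_subset_Ioc_right ht.2))
      (fun u hu => hfrep u ⟨hu.1, hu.2.trans ht.2⟩)
      (fun u hu => hwrep u ⟨hu.1, hu.2.trans ht.2⟩)
    rw [hfxwx] at hkey
    rw [hkey]
    refine setIntegral_congr_ae measurableSet_Ioc (Filter.Eventually.of_forall fun u hu => ?_)
    have hfu := hne' u ⟨hu.1.le, hu.2.trans ht.2⟩
    field_simp
    ring
  have hψ : IntegrableOn (fun s => fd s / f s) (Set.Ioc x y) volume := by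
    have hcinv : ContinuousOn (fun t => 1 / f t) (Set.Icc x y) :=
      continuousOn_const.div hfc hne'
    have h0 : IntegrableOn (fun t => fd t * (1 / f t)) (Set.Icc x y) volume :=
      ((integrableOn_Icc_iff_integrableOn_Ioc).2 hfi).mul_continuousOn hcinv isCompact_Icc
    refine (h0.mono_set Set.Ioc_subset_Icc_self).congr_fun (fun t _ => ?_) measurableSet_Ioc
    field_simp
  have hcomb : ContinuousOn (fun t => f t * w t - 1) (Set.Icc x y) :=
    (hfc.mul hwc).sub continuousOn_const
  have hnull := null_sol hxy hψ hcomb (fun t ht => hmain t ht)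
  have hwf : ∀ t ∈ Set.Icc x y, w t = 1 / f t := by
    intro t ht
    have h0 := hnull t ht
    have hft := hne' t ht
    field_simp at h0 ⊢
    linarith [h0]
  refine ⟨hwd, ?_⟩
  have h1 := hwrep y ⟨hxy, le_rfl⟩
  rw [hwx] at h1
  show 1 / f y - 1 / f x = _
  rw [← hwf y ⟨hxy, le_rfl⟩]
  linarith

/-- Lemma 4.1 (reduction of order): if `u₁` is a nonvanishing solution of `(τ - λ) u = 0`
on `(c,d) ⊆ (a,b)` and `x₀ ∈ (c,d)`, then `u₂(x) = u₁(x) ∫_{x₀}^x dt/(p(t) u₁(t)²)` is also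
a solution on `(c,d)`, and `u₁, u₂` are linearly independent on `(c,d)`. -/

theorem reduction_of_order
    (a b : EReal) (p q r s : ℝ → ℝ) (H : SLH a b p q r s) (lam : ℝ)
    (c d : EReal) (hsub : EI c d ⊆ EI a b) (x₀ : ℝ) (hx₀ : x₀ ∈ EI c d)
    (u₁ : ℝ → ℝ) (hu₁ : IsSolution (EI c d) p q r s lam u₁)
    (hne : ∀ x ∈ EI c d, u₁ x ≠ 0) :
    IsSolution (EI c d) p q r s lam
        (fun x => u₁ x * ∫ t in x₀..x, 1 / (p t * u₁ t ^ 2)) ∧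
      LinIndepOn (EI c d) u₁
        (fun x => u₁ x * ∫ t in x₀..x, 1 / (p t * u₁ t ^ 2)) := by
  set I := EI c d with hIdef
  -- order convexity of I
  have hIconv : ∀ ⦃u⦄, u ∈ I → ∀ ⦃v⦄, v ∈ I → Set.uIcc u v ⊆ I := by
    intro u hu v hv t ht
    rw [Set.uIcc, Set.mem_Icc] at ht
    constructor
    · calc c < ((min u v : ℝ) : EReal) := by
            rcases le_total u v with h | h
            · rw [min_eq_left h]; exact hu.1
            · rw [min_eq_right h]; exact hv.1
        _ ≤ (t : EReal) := EReal.coe_le_coe_iff.2 ht.1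
    · calc (t : EReal) ≤ ((max u v : ℝ) : EReal) := EReal.coe_le_coe_iff.2 ht.2
        _ < d := by
            rcases le_total u v with h | h
            · rw [max_eq_right h]; exact hv.2
            · rw [max_eq_left h]; exact hu.2
  obtain ⟨u₁d, u₁1, u₁1d, ⟨⟨hFTC1, hae1, hFTC11⟩, hsol1⟩⟩ := hu₁
  set md : ℝ → ℝ := fun t => 1 / (p t * u₁ t ^ 2) with hmddef
  set m : ℝ → ℝ := fun x => ∫ t in x₀..x, md t with hmdef
  have hgoal : (fun x => u₁ x * ∫ t in x₀..x, 1 / (p t * u₁ t ^ 2)) =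
      (fun x => u₁ x * m x) := rfl
  rw [hgoal]
  -- continuity of u₁ on subintervals
  have hu₁contOn : ∀ ⦃u v : ℝ⦄, u ∈ I → v ∈ I → u ≤ v → ContinuousOn u₁ (Set.Icc u v) := by
    intro u v hu hv huv
    obtain ⟨h1, h2⟩ := rep_of_hasAEDerivOn hIconv hFTC1 hu hv huv
    exact cont_of_rep huv h1 h2
  -- interval integrability of md
  have hmd_ii : ∀ ⦃u⦄, u ∈ I → ∀ ⦃v⦄, v ∈ I → IntervalIntegrable md volume u v := by
    intro u hu v hv
    have hminI : min u v ∈ I := by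
      rcases le_total u v with h | h
      · rw [min_eq_left h]; exact hu
      · rw [min_eq_right h]; exact hv
    have hmaxI : max u v ∈ I := by
      rcases le_total u v with h | h
      · rw [max_eq_right h]; exact hv
      · rw [max_eq_left h]; exact hu
    have hXsub : Set.uIcc u v ⊆ EI a b := fun t ht => hsub (hIconv hu hv ht)
    have hinvp : IntegrableOn (fun t => 1 / p t) (Set.uIcc u v) volume :=
      H.invp_loc.integrableOn_compact_subset hXsub isCompact_uIcc
    have hc : ContinuousOn u₁ (Set.uIcc u v) := by
      rw [Set.uIcc]
      exact hu₁contOn hminI hmaxI min_le_max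
    have hc2 : ContinuousOn (fun t => 1 / u₁ t ^ 2) (Set.uIcc u v) :=
      continuousOn_const.div (hc.pow 2)
        (fun t ht => pow_ne_zero 2 (hne t (hIconv hu hv ht)))
    have h0 : IntegrableOn (fun t => (1 / p t) * (1 / u₁ t ^ 2)) (Set.uIcc u v) volume :=
      hinvp.mul_continuousOn hc2 isCompact_uIcc
    refine (IntegrableOn.intervalIntegrable ?_)
    refine h0.congr_fun (fun t _ => ?_) measurableSet_uIcc
    simp [hmddef, one_div, mul_inv]
    ring
  have hm : HasAEDerivOn I m md := by
    intro u hu v hv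
    have hii_uv := hmd_ii hu hv
    have hii_xu := hmd_ii hx₀ hu
    have hii_xv := hmd_ii hx₀ hv
    exact ⟨hii_uv, intervalIntegral.integral_interval_sub_left hii_xv hii_xu⟩
  -- derivative data for u₂
  have hu₂FTC : HasAEDerivOn I (fun t => u₁ t * m t) (fun t => u₁d t * m t + u₁ t * md t) :=
    HasAEDerivOn.mulAE hIconv hFTC1 hm
  have hinv : HasAEDerivOn I (fun t => 1 / u₁ t) (fun t => -(u₁d t / u₁ t ^ 2)) :=
    HasAEDerivOn.invAE hIconv hFTC1 hne
  have hprod : HasAEDerivOn I (fun t => u₁1 t * m t) (fun t => u₁1d t * m t + u₁1 t * md t) :=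
    HasAEDerivOn.mulAE hIconv hFTC11 hm
  have hu₂1FTC : HasAEDerivOn I (fun t => u₁1 t * m t + 1 / u₁ t)
      (fun t => (u₁1d t * m t + u₁1 t * md t) + -(u₁d t / u₁ t ^ 2)) :=
    HasAEDerivOn.addAE hprod hinv
  constructor
  · refine ⟨fun t => u₁d t * m t + u₁ t * md t,
      fun t => u₁1 t * m t + 1 / u₁ t,
      fun t => (u₁1d t * m t + u₁1 t * md t) + -(u₁d t / u₁ t ^ 2),
      ⟨⟨hu₂FTC, ?_, hu₂1FTC⟩, ?_⟩⟩
    · -- quasi-derivative identity a.e.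
      filter_upwards [H.ppos, hae1] with t hp h1
      intro htI
      have hpp : 0 < p t := hp (hsub htI)
      have hu1t : u₁ t ≠ 0 := hne t htI
      have h1t := h1 htI
      show u₁1 t * m t + 1 / u₁ t =
        p t * ((u₁d t * m t + u₁ t * md t) + s t * (u₁ t * m t))
      rw [h1t, hmddef]
      field_simp
      ring
    · -- the equation (τ - lam) u₂ = 0 a.e.
      filter_upwards [H.ppos, hae1, hsol1] with t hp h1 hs
      intro htI
      have hpp : 0 < p t := hp (hsub htI)
      have hu1t : u₁ t ≠ 0 := hne t htI
      have h1t := h1 htI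
      have hst := hs htI
      unfold tauApp at hst ⊢
      have key : -((u₁1d t * m t + u₁1 t * md t) + -(u₁d t / u₁ t ^ 2)) +
          s t * (u₁1 t * m t + 1 / u₁ t) + q t * (u₁ t * m t) =
          m t * (-u₁1d t + s t * u₁1 t + q t * u₁ t) := by
        rw [h1t, hmddef]
        field_simp
        ring
      calc (1 / r t) * (-((u₁1d t * m t + u₁1 t * md t) + -(u₁d t / u₁ t ^ 2)) +
            s t * (u₁1 t * m t + 1 / u₁ t) + q t * (u₁ t * m t))
          = m t * ((1 / r t) * (-u₁1d t + s t * u₁1 t + q t * u₁ t)) := by rw [key]; ring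
        _ = m t * (lam * u₁ t) := by rw [hst]
        _ = lam * (u₁ t * m t) := by ring
  · -- linear independence
    intro c₁ c₂ hzero
    have hmx₀ : m x₀ = 0 := by
      rw [hmdef]; simp
    have hc₁ : c₁ = 0 := by
      have h0 := hzero x₀ hx₀
      simp only [hmx₀, mul_zero, add_zero, mul_eq_zero] at h0
      rcases h0 with h | h
      · exact h
      · exact absurd h (hne x₀ hx₀)
    -- pick x₁ > x₀ in I
    obtain ⟨x₁, hx₁gt, hx₁lt⟩ := EReal.exists_between_coe_real hx₀.2
    have hx₀x₁ : x₀ < x₁ := EReal.coe_lt_coe_iff.1 hx₁gt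
    have hx₁I : x₁ ∈ I := ⟨hx₀.1.trans hx₁gt, hx₁lt⟩
    have hIocsub : Set.Ioc x₀ x₁ ⊆ I := by
      intro t ht
      have : t ∈ Set.uIcc x₀ x₁ := by
        rw [Set.uIcc_of_le hx₀x₁.le]
        exact ⟨ht.1.le, ht.2⟩
      exact hIconv hx₀ hx₁I this
    -- m x₁ > 0
    have hint : IntegrableOn md (Set.Ioc x₀ x₁) volume :=
      (intervalIntegrable_iff_integrableOn_Ioc_of_le hx₀x₁.le).1 (hmd_ii hx₀ hx₁I)
    have hnonneg : 0 ≤ᶠ[ae (volume.restrict (Set.Ioc x₀ x₁))] md := by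
      filter_upwards [ae_restrict_of_ae H.ppos, ae_restrict_mem measurableSet_Ioc]
        with t hp ht
      have hpp : 0 < p t := hp (hsub (hIocsub ht))
      have hu1t : u₁ t ≠ 0 := hne t (hIocsub ht)
      have : 0 < p t * u₁ t ^ 2 := mul_pos hpp (by positivity)
      rw [hmddef]
      positivity
    have hmpos : 0 < m x₁ := by
      rw [hmdef]
      show 0 < ∫ t in x₀..x₁, md t
      rw [intervalIntegral.integral_of_le hx₀x₁.le]
      rw [MeasureTheory.setIntegral_pos_iff_support_of_nonneg_ae hnonneg hint]
      -- show 0 < volume (support md ∩ Ioc x₀ x₁)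
      have hnull : volume (Set.Ioc x₀ x₁ \ Function.support md) = 0 := by
        have hN : volume {t : ℝ | ¬ (t ∈ EI a b → 0 < p t)} = 0 := by
          have := H.ppos
          rw [MeasureTheory.ae_iff] at this
          exact this
        refine measure_mono_null ?_ hN
        intro t ht
        simp only [Set.mem_setOf_eq, Classical.not_imp]
        have htI : t ∈ I := hIocsub ht.1
        refine ⟨hsub htI, ?_⟩
        intro hpt
        apply ht.2
        have hu1t : u₁ t ≠ 0 := hne t htI
        have : 0 < md t := by rw [hmddef]; positivity
        exact Function.mem_support.2 (ne_of_gt this)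
      have hle : volume (Set.Ioc x₀ x₁) ≤
          volume (Function.support md ∩ Set.Ioc x₀ x₁) + volume (Set.Ioc x₀ x₁ \ Function.support md) := by
        refine le_trans (measure_mono ?_) (measure_union_le _ _)
        intro t ht
        by_cases hts : t ∈ Function.support md
        · exact Or.inl ⟨hts, ht⟩
        · exact Or.inr ⟨ht, hts⟩
      rw [hnull, add_zero] at hle
      have hIocpos : 0 < volume (Set.Ioc x₀ x₁) := by
        rw [Real.volume_Ioc]
        simp [hx₀x₁]
      exact lt_of_lt_of_le hIocpos hle
    have h1 := hzero x₁ hx₁I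
    simp only [hc₁, zero_mul, zero_add, mul_eq_zero] at h1
    rcases h1 with h | h | h
    · exact ⟨hc₁, h⟩
    · exact absurd h (hne x₁ hx₁I)
    · exact absurd h (ne_of_gt hmpos)
end
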